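/- arXiv:math/0508041 — 4 statements merged into one kernel-verified Lean document; each statement's English description precedes it below -/
import Mathlib

section
/- The generating function Σ_{k ≥ 0} Ω^{(ℓ)}(π; k) t^k for the left enriched order polynomial of a permutation π of [n] equals ((1+t)^n/(1-t)^{n+1})·(4t/(1+t)^2)^{lpe(π)}. In particular, Ω^{(ℓ)}(π; k) depends only on the number of left peaks of π. -/
open scoped Classical

noncomputable section

/-- The value of `π` at the 1-based position `i`, with the convention
`π(0) = π(n+1) = 0` and values in `{1, …, n}`. -/
def pval {n : ℕ} (π : Equiv.Perm (Fin n)) (i : ℕ) : ℕ :=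
  if h : 1 ≤ i ∧ i ≤ n then ((π ⟨i - 1, by omega⟩ : Fin n) : ℕ) + 1 else 0

/-- The descent set of `π`: positions `1 ≤ s ≤ n-1` with `π(s) > π(s+1)`. -/
def desSet {n : ℕ} (π : Equiv.Perm (Fin n)) : Finset ℕ :=
  (Finset.Ico 1 n).filter fun s => pval π (s + 1) < pval π s

/-- The descent number of `π`. -/
def des {n : ℕ} (π : Equiv.Perm (Fin n)) : ℕ := (desSet π).card

/-- `i` is a peak of `π` (with the convention `π(0) = π(n+1) = 0`). -/
def isPk {n : ℕ} (π : Equiv.Perm (Fin n)) (i : ℕ) : Prop :=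
  pval π (i - 1) < pval π i ∧ pval π (i + 1) < pval π i

/-- Interior peak set: peaks `i` with `1 < i < n`. -/
def intPk {n : ℕ} (π : Equiv.Perm (Fin n)) : Finset ℕ :=
  (Finset.Ioo 1 n).filter (isPk π)

/-- Left peak set: peaks `i` with `1 ≤ i < n`. -/
def leftPk {n : ℕ} (π : Equiv.Perm (Fin n)) : Finset ℕ :=
  (Finset.Ico 1 n).filter (isPk π)

/-- Right peak set: peaks `i` with `1 < i ≤ n`. -/
def rightPk {n : ℕ} (π : Equiv.Perm (Fin n)) : Finset ℕ :=
  (Finset.Ioc 1 n).filter (isPk π)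

/-- Exterior peak set: peaks `i` with `1 ≤ i ≤ n`. -/
def extPk {n : ℕ} (π : Equiv.Perm (Fin n)) : Finset ℕ :=
  (Finset.Icc 1 n).filter (isPk π)

/-- Position of a nonzero integer `a` in the total order `-1 < 1 < -2 < 2 < ⋯`. -/
def ek (a : ℤ) : ℤ := if 0 < a then 2 * a - 1 else -2 * a - 2

/-- `Ω'(π; k)`: the number of enriched `π`-partitions with parts in
`[k]' = {-1 < 1 < -2 < 2 < ⋯ < -k < k}`. -/
def enrichedCount {n : ℕ} (π : Equiv.Perm (Fin n)) (k : ℕ) : ℕ :=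
  Nat.card {a : Fin n → ℤ //
    (∀ s, a s ≠ 0 ∧ |a s| ≤ (k : ℤ)) ∧
    ∀ (s : ℕ) (hs : s + 1 < n),
      if π ⟨s + 1, hs⟩ < π ⟨s, Nat.lt_of_succ_lt hs⟩ then
        ek (a ⟨s, Nat.lt_of_succ_lt hs⟩) < ek (a ⟨s + 1, hs⟩) ∨
          (a ⟨s, Nat.lt_of_succ_lt hs⟩ = a ⟨s + 1, hs⟩ ∧ a ⟨s + 1, hs⟩ < 0)
      else
        ek (a ⟨s, Nat.lt_of_succ_lt hs⟩) < ek (a ⟨s + 1, hs⟩) ∨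
          (a ⟨s, Nat.lt_of_succ_lt hs⟩ = a ⟨s + 1, hs⟩ ∧ 0 < a ⟨s + 1, hs⟩)}

/-- Position of an integer `a` in the total order `0 < -1 < 1 < -2 < 2 < ⋯`. -/
def el (a : ℤ) : ℤ := if 0 < a then 2 * a else if a = 0 then 0 else -2 * a - 1

/-- `Ω^{(ℓ)}(π; k)`: the number of left enriched `π`-partitions with parts in
`[k]^{(ℓ)} = {0 < -1 < 1 < ⋯ < -k < k}`. -/
def leftEnrichedCount {n : ℕ} (π : Equiv.Perm (Fin n)) (k : ℕ) : ℕ :=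
  Nat.card {a : Fin n → ℤ //
    (∀ s, |a s| ≤ (k : ℤ)) ∧
    ∀ (s : ℕ) (hs : s + 1 < n),
      if π ⟨s + 1, hs⟩ < π ⟨s, Nat.lt_of_succ_lt hs⟩ then
        el (a ⟨s, Nat.lt_of_succ_lt hs⟩) < el (a ⟨s + 1, hs⟩) ∨
          (a ⟨s, Nat.lt_of_succ_lt hs⟩ = a ⟨s + 1, hs⟩ ∧ a ⟨s + 1, hs⟩ < 0)
      else
        el (a ⟨s, Nat.lt_of_succ_lt hs⟩) < el (a ⟨s + 1, hs⟩) ∨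
          (a ⟨s, Nat.lt_of_succ_lt hs⟩ = a ⟨s + 1, hs⟩ ∧ 0 ≤ a ⟨s + 1, hs⟩)}

/-! ### Auxiliary development -/

namespace LEPAux

open PowerSeries Finset

/-- One admissible step: value can strictly increase, or stay equal when the
parity condition dictated by the descent bit `d` holds. -/
def okStep (d : Bool) (v' v : ℕ) : Prop :=
  v' < v ∨ (v' = v ∧ (if d then Odd v else Even v))

lemma okStep_le {d : Bool} {v' v : ℕ} (h : okStep d v' v) : v' ≤ v := by
  rcases h with h | ⟨h, _⟩ <;> omega

/-- Validity of an encoded sequence `b` of length `m+1` with respect to a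
descent word `w`. -/
def Valid (w : ℕ → Bool) (m : ℕ) (b : Fin (m + 1) → ℕ) : Prop :=
  ∀ (s : ℕ) (hs : s < m),
    okStep (w s) (b ⟨s, by omega⟩) (b ⟨s + 1, by omega⟩)

lemma Valid.le_last {w : ℕ → Bool} {m : ℕ} {b : Fin (m + 1) → ℕ}
    (h : Valid w m b) (s : Fin (m + 1)) : b s ≤ b (Fin.last m) := by
  obtain ⟨s, hs⟩ := s
  have key : ∀ j : ℕ, ∀ hj : s + j ≤ m, b ⟨s, hs⟩ ≤ b ⟨s + j, by omega⟩ := by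
    intro j
    induction j with
    | zero => intro _; exact le_rfl
    | succ j ih =>
      intro hj
      have h1 : b ⟨s, hs⟩ ≤ b ⟨s + j, by omega⟩ := ih (by omega)
      have h2 := okStep_le (h (s + j) (by omega))
      exact le_trans h1 h2
  have := key (m - s) (by omega)
  have hl : Fin.last m = ⟨s + (m - s), by omega⟩ := by
    ext; simp [Fin.last]; omega
  rw [hl]
  exact this

lemma finiteValid (w : ℕ → Bool) (m v : ℕ) :
    Finite {b : Fin (m + 1) → ℕ // Valid w m b ∧ b (Fin.last m) = v} := by
  apply Finite.of_injective
    (f := fun b (s : Fin (m + 1)) => (⟨b.1 s, by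
      have := b.2.1.le_last s
      have := b.2.2
      omega⟩ : Fin (v + 1)))
  intro x y hxy
  apply Subtype.ext
  funext s
  have := congrFun hxy s
  simpa [Fin.ext_iff] using this

instance (w : ℕ → Bool) (m v : ℕ) :
    Finite {b : Fin (m + 1) → ℕ // Valid w m b ∧ b (Fin.last m) = v} :=
  finiteValid w m v

/-- Number of valid sequences of length `m+1` ending at `v`. -/
def N (w : ℕ → Bool) (m v : ℕ) : ℕ :=
  Nat.card {b : Fin (m + 1) → ℕ // Valid w m b ∧ b (Fin.last m) = v}

lemma N_zero (w : ℕ → Bool) (v : ℕ) : N w 0 v = 1 := by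
  have : Unique {b : Fin 1 → ℕ // Valid w 0 b ∧ b (Fin.last 0) = v} :=
    { default := ⟨fun _ => v, fun s hs => absurd hs (by omega), rfl⟩
      uniq := by
        rintro ⟨b, -, h⟩
        apply Subtype.ext
        funext s
        show b s = v
        have hs : b s = b (Fin.last 0) := congrArg b (Subsingleton.elim _ _)
        rw [hs, h] }
  rw [N, Nat.card_unique]

/-- The set of values allowed immediately before `v` across a step with bit `d`. -/
def allowed (d : Bool) (v : ℕ) : Finset ℕ :=
  (Finset.range (v + 1)).filter fun v' => okStep d v' v

lemma allowed_of_cond {d : Bool} {v : ℕ} (h : if d then Odd v else Even v) :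
    allowed d v = Finset.range (v + 1) := by
  ext v'
  simp only [allowed, Finset.mem_filter, Finset.mem_range]
  simp only [okStep]
  constructor
  · exact fun hh => hh.1
  · intro hv
    refine ⟨hv, ?_⟩
    rcases Nat.lt_or_ge v' v with h' | h'
    · exact Or.inl h'
    · exact Or.inr ⟨by omega, h⟩

lemma allowed_of_not_cond {d : Bool} {v : ℕ} (h : ¬ (if d then Odd v else Even v)) :
    allowed d v = Finset.range v := by
  ext v'
  simp only [allowed, Finset.mem_filter, Finset.mem_range]
  simp only [okStep]
  constructor
  · rintro ⟨h1, h2 | ⟨h2, h3⟩⟩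
    · exact h2
    · exact absurd h3 h
  · intro hv
    exact ⟨by omega, Or.inl hv⟩

lemma natCard_sigma {s : Finset ℕ} (f : s → Type*) [∀ i, Finite (f i)] :
    Nat.card (Σ i, f i) = ∑ i : s, Nat.card (f i) := by
  letI : ∀ i, Fintype (f i) := fun i => Fintype.ofFinite (f i)
  simp [Nat.card_eq_fintype_card, Fintype.card_sigma]

lemma sigma_eq_helper {T : Type*} {s : Finset ℕ} {Q : ℕ → T → Prop}
    (x y : Σ v : s, {t : T // Q v t}) (h1 : (x.1 : ℕ) = y.1) (h2 : x.2.1 = y.2.1) :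
    x = y := by
  obtain ⟨⟨v, hv⟩, ⟨t, ht⟩⟩ := x
  obtain ⟨⟨v', hv'⟩, ⟨t', ht'⟩⟩ := y
  dsimp at h1 h2
  subst h1; subst h2
  rfl

/-- Strip off the last entry of a valid sequence. -/
def recEquiv (w : ℕ → Bool) (m v : ℕ) :
    {b : Fin (m + 2) → ℕ // Valid w (m + 1) b ∧ b (Fin.last (m + 1)) = v} ≃
      Σ v' : allowed (w m) v,
        {b : Fin (m + 1) → ℕ // Valid w m b ∧ b (Fin.last m) = (v' : ℕ)} where
  toFun b :=
    ⟨⟨b.1 ⟨m, by omega⟩, by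
        have hstep := b.2.1 m (by omega)
        have hlast : b.1 ⟨m + 1, by omega⟩ = v := b.2.2
        rw [hlast] at hstep
        simp only [allowed, mem_filter, mem_range]
        exact ⟨by have := okStep_le hstep; omega, hstep⟩⟩,
      ⟨fun s => b.1 s.castSucc, fun s hs => b.2.1 s (by omega), rfl⟩⟩
  invFun x :=
    ⟨Fin.snoc x.2.1 v, by
      refine ⟨fun s hs => ?_, ?_⟩
      · rcases Nat.lt_or_ge s m with h | h
        · have hv := x.2.2.1 s h
          have e1 : (Fin.snoc x.2.1 v : Fin (m + 2) → ℕ) ⟨s, by omega⟩ =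
              x.2.1 ⟨s, by omega⟩ := by
            rw [show (⟨s, by omega⟩ : Fin (m + 2)) = Fin.castSucc ⟨s, by omega⟩ from rfl,
              Fin.snoc_castSucc]
          have e2 : (Fin.snoc x.2.1 v : Fin (m + 2) → ℕ) ⟨s + 1, by omega⟩ =
              x.2.1 ⟨s + 1, by omega⟩ := by
            rw [show (⟨s + 1, by omega⟩ : Fin (m + 2)) = Fin.castSucc ⟨s + 1, by omega⟩ from rfl,
              Fin.snoc_castSucc]
          rw [e1, e2]
          exact hv
        · have e1 : (Fin.snoc x.2.1 v : Fin (m + 2) → ℕ) ⟨s, by omega⟩ =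
              x.2.1 (Fin.last m) := by
            have hc : (⟨s, by omega⟩ : Fin (m + 2)) = Fin.castSucc (Fin.last m) := by
              ext; simp [Fin.last]; omega
            rw [hc, Fin.snoc_castSucc]
          have e2 : (Fin.snoc x.2.1 v : Fin (m + 2) → ℕ) ⟨s + 1, by omega⟩ = v := by
            have hc : (⟨s + 1, by omega⟩ : Fin (m + 2)) = Fin.last (m + 1) := by
              ext; simp [Fin.last]; omega
            rw [hc, Fin.snoc_last]
          have hws : w s = w m := by rw [show s = m from by omega]
          rw [e1, e2, x.2.2.2, hws]
          have hmem := x.1.2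
          simp only [allowed, mem_filter] at hmem
          exact hmem.2
      · show (Fin.snoc x.2.1 v : Fin (m + 2) → ℕ) (Fin.last (m + 1)) = v
        rw [Fin.snoc_last]⟩
  left_inv b := by
    apply Subtype.ext
    funext s
    show (Fin.snoc (fun s => b.1 (Fin.castSucc s)) v : Fin (m + 2) → ℕ) s = b.1 s
    induction s using Fin.lastCases with
    | last => rw [Fin.snoc_last, b.2.2]
    | cast i => rw [Fin.snoc_castSucc]
  right_inv x := by
    apply sigma_eq_helper (Q := fun v b => Valid w m b ∧ b (Fin.last m) = v)
    · show (Fin.snoc x.2.1 v : Fin (m + 2) → ℕ) ⟨m, by omega⟩ = (x.1 : ℕ)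
      rw [show (⟨m, by omega⟩ : Fin (m + 2)) = Fin.castSucc (Fin.last m) from rfl,
        Fin.snoc_castSucc, x.2.2.2]
    · funext s
      show (Fin.snoc x.2.1 v : Fin (m + 2) → ℕ) (Fin.castSucc s) = x.2.1 s
      rw [Fin.snoc_castSucc]

lemma N_succ (w : ℕ → Bool) (m v : ℕ) :
    N w (m + 1) v = ∑ v' ∈ allowed (w m) v, N w m v' := by
  rw [N, Nat.card_congr (recEquiv w m v), natCard_sigma]
  rw [← Finset.sum_coe_sort (allowed (w m) v) (fun v' => N w m v')]
  rfl

/-! ### Power series layer -/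

/-- `A = (1 - X)⁻¹` in `ℚ⟦X⟧`. -/
def A : PowerSeries ℚ := (1 - PowerSeries.X)⁻¹

lemma one_sub_X_mul_A : (1 - PowerSeries.X) * A = 1 :=
  PowerSeries.mul_inv_cancel _ (by simp)

lemma mk_sum_le (f : ℕ → ℚ) :
    PowerSeries.mk (fun u => ∑ i ∈ range (u + 1), f i) = A * PowerSeries.mk f := by
  have h : (1 - PowerSeries.X) * PowerSeries.mk (fun u => ∑ i ∈ range (u + 1), f i) =
      PowerSeries.mk f := by
    ext u
    rw [sub_mul, one_mul, map_sub]
    cases u with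
    | zero => simp
    | succ u =>
      rw [PowerSeries.coeff_succ_X_mul]
      simp only [PowerSeries.coeff_mk]
      rw [Finset.sum_range_succ (n := u + 1)]
      ring
  calc PowerSeries.mk (fun u => ∑ i ∈ range (u + 1), f i)
      = ((1 - PowerSeries.X) * A) * PowerSeries.mk (fun u => ∑ i ∈ range (u + 1), f i) := by
        rw [one_sub_X_mul_A, one_mul]
    _ = A * ((1 - PowerSeries.X) * PowerSeries.mk (fun u => ∑ i ∈ range (u + 1), f i)) := by
        ring
    _ = A * PowerSeries.mk f := by rw [h]

lemma mk_sum_lt (f : ℕ → ℚ) :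
    PowerSeries.mk (fun u => ∑ i ∈ range u, f i) =
      PowerSeries.X * (A * PowerSeries.mk f) := by
  ext u
  cases u with
  | zero => simp
  | succ u =>
    rw [PowerSeries.coeff_succ_X_mul, ← mk_sum_le, PowerSeries.coeff_mk, PowerSeries.coeff_mk]

lemma mk_one_eq_A : PowerSeries.mk (fun _ => (1 : ℚ)) = A := by
  have h := mk_sum_le (fun i => if i = 0 then 1 else 0)
  have h1 : PowerSeries.mk (fun i : ℕ => if i = 0 then (1 : ℚ) else 0) = 1 := by
    ext u
    rw [PowerSeries.coeff_mk, PowerSeries.coeff_one]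
  have h2 : ∀ u : ℕ, (∑ i ∈ range (u + 1), if i = 0 then (1 : ℚ) else 0) = 1 := by
    intro u
    rw [Finset.sum_ite_eq' (range (u + 1)) 0 (fun _ => (1 : ℚ))]
    simp
  rw [h1, mul_one] at h
  rw [← h]
  ext u
  rw [PowerSeries.coeff_mk, PowerSeries.coeff_mk, h2]

/-- Generating function of counts at even positions. -/
def Ge (w : ℕ → Bool) (m : ℕ) : PowerSeries ℚ :=
  PowerSeries.mk fun u => (N w m (2 * u) : ℚ)

/-- Generating function of counts at odd positions. -/
def Go (w : ℕ → Bool) (m : ℕ) : PowerSeries ℚ :=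
  PowerSeries.mk fun u => (N w m (2 * u + 1) : ℚ)

lemma sum_range_two_mul (g : ℕ → ℚ) (u : ℕ) :
    ∑ v ∈ range (2 * u), g v = ∑ i ∈ range u, (g (2 * i) + g (2 * i + 1)) := by
  induction u with
  | zero => simp
  | succ u ih =>
    have h2 : 2 * (u + 1) = (2 * u + 1) + 1 := by ring
    rw [h2, Finset.sum_range_succ, Finset.sum_range_succ, Finset.sum_range_succ, ih]
    ring

lemma sum_range_odd_split (g : ℕ → ℚ) (u : ℕ) :
    ∑ v ∈ range (2 * u + 1), g v =
      ∑ i ∈ range (u + 1), g (2 * i) + ∑ i ∈ range u, g (2 * i + 1) := by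
  rw [Finset.sum_range_succ (n := 2 * u), sum_range_two_mul, Finset.sum_add_distrib,
    Finset.sum_range_succ (f := fun i => g (2 * i))]
  ring

lemma sum_range_even_split (g : ℕ → ℚ) (u : ℕ) :
    ∑ v ∈ range (2 * u + 2), g v =
      ∑ i ∈ range (u + 1), g (2 * i) + ∑ i ∈ range (u + 1), g (2 * i + 1) := by
  have h2 : 2 * u + 2 = 2 * (u + 1) := by ring
  rw [h2, sum_range_two_mul, Finset.sum_add_distrib]

/-- Coefficient identity used both in the ascent recursion and final assembly. -/
lemma coeff_combo (w : ℕ → Bool) (m u : ℕ) :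
    (PowerSeries.coeff u) (A * Ge w m + PowerSeries.X * (A * Go w m)) =
      ((∑ v ∈ range (2 * u + 1), N w m v : ℕ) : ℚ) := by
  rw [map_add, Ge, Go, ← mk_sum_le (fun i => (N w m (2 * i) : ℚ)),
    ← mk_sum_lt (fun i => (N w m (2 * i + 1) : ℚ)), PowerSeries.coeff_mk,
    PowerSeries.coeff_mk, Nat.cast_sum, sum_range_odd_split (fun v => (N w m v : ℚ)) u]

lemma rec_asc (w : ℕ → Bool) (m : ℕ) (h : w m = false) :
    Ge w (m + 1) = A * Ge w m + PowerSeries.X * (A * Go w m) ∧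
      Go w (m + 1) = Ge w (m + 1) := by
  have heven : ∀ u : ℕ, N w (m + 1) (2 * u) = ∑ v ∈ range (2 * u + 1), N w m v := by
    intro u
    rw [N_succ, allowed_of_cond]
    rw [h]
    simp [Nat.even_iff]
  have hodd : ∀ u : ℕ, N w (m + 1) (2 * u + 1) = ∑ v ∈ range (2 * u + 1), N w m v := by
    intro u
    rw [N_succ, allowed_of_not_cond]
    rw [h]
    simp [Nat.even_iff, Nat.add_mod]
  constructor
  · ext u
    rw [Ge, PowerSeries.coeff_mk, coeff_combo, heven]
  · ext u
    rw [Go, Ge, PowerSeries.coeff_mk, PowerSeries.coeff_mk, hodd, heven]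

lemma rec_des (w : ℕ → Bool) (m : ℕ) (h : w m = true) :
    Go w (m + 1) = A * Ge w m + A * Go w m ∧
      Ge w (m + 1) = PowerSeries.X * Go w (m + 1) := by
  have hodd : ∀ u : ℕ, N w (m + 1) (2 * u + 1) = ∑ v ∈ range (2 * u + 2), N w m v := by
    intro u
    rw [N_succ, allowed_of_cond]
    rw [h]
    simp [Nat.odd_iff, Nat.add_mod]
  have heven : ∀ u : ℕ, N w (m + 1) (2 * u) = ∑ v ∈ range (2 * u), N w m v := by
    intro u
    rw [N_succ, allowed_of_not_cond]
    rw [h]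
    simp [Nat.odd_iff, Nat.mul_mod]
  have hGo : Go w (m + 1) = A * Ge w m + A * Go w m := by
    ext u
    rw [Go, PowerSeries.coeff_mk, hodd, map_add]
    rw [show Ge w m = PowerSeries.mk fun u => (N w m (2 * u) : ℚ) from rfl]
    rw [show Go w m = PowerSeries.mk fun u => (N w m (2 * u + 1) : ℚ) from rfl]
    rw [← mk_sum_le (fun i => (N w m (2 * i) : ℚ)),
      ← mk_sum_le (fun i => (N w m (2 * i + 1) : ℚ)), PowerSeries.coeff_mk,
      PowerSeries.coeff_mk, Nat.cast_sum, sum_range_even_split (fun v => (N w m v : ℚ)) u]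
  refine ⟨hGo, ?_⟩
  ext u
  cases u with
  | zero =>
    have h0 : N w (m + 1) 0 = 0 := by
      have := heven 0
      simpa using this
    simp [Ge, h0]
  | succ u =>
    rw [PowerSeries.coeff_succ_X_mul, Ge, PowerSeries.coeff_mk, Go, PowerSeries.coeff_mk]
    rw [heven (u + 1), hodd u, show 2 * (u + 1) = 2 * u + 2 from by ring]

/-! ### Left peaks of a word and the invariant -/

/-- The step `m` starts a new descent run. -/
def newPk (w : ℕ → Bool) (m : ℕ) : Prop :=
  w m = true ∧ (m = 0 ∨ w (m - 1) = false)

/-- Number of left peaks of the word `w` restricted to its first `m` letters. -/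
def lp (w : ℕ → Bool) : ℕ → ℕ
  | 0 => 0
  | m + 1 => lp w m + (if newPk w m then 1 else 0)

lemma invariant (w : ℕ → Bool) (m : ℕ) :
    (m = 0 ∧ Ge w m = A ∧ Go w m = A) ∨
    (∃ q, 1 ≤ m ∧ w (m - 1) = false ∧ m = 2 * lp w m + q ∧
      Ge w m = A ^ (m + 1) * (4 * PowerSeries.X) ^ (lp w m) * (1 + PowerSeries.X) ^ q ∧
      Go w m = Ge w m) ∨
    (∃ p q, 1 ≤ m ∧ w (m - 1) = true ∧ lp w m = p + 1 ∧ m = 2 * p + 1 + q ∧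
      Go w m = 2 * (A ^ (m + 1) * (4 * PowerSeries.X) ^ p * (1 + PowerSeries.X) ^ q) ∧
      Ge w m = PowerSeries.X * Go w m) := by
  induction m with
  | zero =>
    left
    refine ⟨rfl, ?_, ?_⟩
    · rw [Ge, show (fun u => (N w 0 (2 * u) : ℚ)) = fun _ => (1 : ℚ) from
        funext fun u => by rw [N_zero]; norm_num, mk_one_eq_A]
    · rw [Go, show (fun u => (N w 0 (2 * u + 1) : ℚ)) = fun _ => (1 : ℚ) from
        funext fun u => by rw [N_zero]; norm_num, mk_one_eq_A]
  | succ m ih =>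
    rcases ih with ⟨h0, hGe, hGo⟩ | ⟨q, hm, hw, hq, hGe, hGo⟩ | ⟨p, q, hm, hw, hlp, hq, hGo, hGe⟩
    · subst h0
      rcases Bool.eq_false_or_eq_true (w 0) with hwm | hwm
      · right; right
        have hnp : newPk w 0 := ⟨hwm, Or.inl rfl⟩
        have hlp1 : lp w (0 + 1) = 1 := by rw [lp, lp, if_pos hnp]
        refine ⟨0, 0, le_rfl, hwm, by omega, by omega, ?_, (rec_des w 0 hwm).2⟩
        rw [(rec_des w 0 hwm).1, hGe, hGo]
        ring
      · right; left
        have hnp : ¬ newPk w 0 := by simp [newPk, hwm]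
        have hlp1 : lp w (0 + 1) = 0 := by rw [lp, lp, if_neg hnp]
        refine ⟨1, le_rfl, hwm, by omega, ?_, ?_⟩
        · rw [(rec_asc w 0 hwm).1, hGe, hGo, hlp1]
          ring
        · exact (rec_asc w 0 hwm).2
    · -- ascent state
      rcases Bool.eq_false_or_eq_true (w m) with hwm | hwm
      · right; right
        have hnp : newPk w m := ⟨hwm, Or.inr hw⟩
        have hlp1 : lp w (m + 1) = lp w m + 1 := by rw [lp, if_pos hnp]
        refine ⟨lp w m, q, by omega, by simpa using hwm, by omega, by omega,
          ?_, (rec_des w m hwm).2⟩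
        rw [(rec_des w m hwm).1, hGo, hGe]
        ring
      · right; left
        have hnp : ¬ newPk w m := by simp [newPk, hwm]
        have hlp1 : lp w (m + 1) = lp w m := by rw [lp, if_neg hnp]; omega
        refine ⟨q + 1, by omega, by simpa using hwm, by omega, ?_, ?_⟩
        · rw [(rec_asc w m hwm).1, hGo, hGe, hlp1]
          ring
        · exact (rec_asc w m hwm).2
    · -- descent state
      rcases Bool.eq_false_or_eq_true (w m) with hwm | hwm
      · right; right
        have hnp : ¬ newPk w m := by
          rintro ⟨-, h0 | h0⟩
          · omega
          · rw [h0] at hw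
            exact absurd hw (by simp)
        have hlp1 : lp w (m + 1) = p + 1 := by rw [lp, if_neg hnp, hlp]
        refine ⟨p, q + 1, by omega, by simpa using hwm, hlp1, by omega,
          ?_, (rec_des w m hwm).2⟩
        rw [(rec_des w m hwm).1, hGe, hGo]
        ring
      · right; left
        have hnp : ¬ newPk w m := by simp [newPk, hwm]
        have hlp1 : lp w (m + 1) = p + 1 := by rw [lp, if_neg hnp, hlp]
        refine ⟨q, by omega, by simpa using hwm, by omega, ?_, ?_⟩
        · rw [(rec_asc w m hwm).1, hGe, hGo, hlp1]
          ring
        · exact (rec_asc w m hwm).2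

lemma final (w : ℕ → Bool) (m : ℕ) :
    ∃ q, m + 1 = 2 * lp w m + q ∧
      PowerSeries.mk (fun k => ((∑ v ∈ range (2 * k + 1), N w m v : ℕ) : ℚ)) =
        A ^ (m + 2) * (4 * PowerSeries.X) ^ (lp w m) * (1 + PowerSeries.X) ^ q := by
  have hmk : PowerSeries.mk (fun k => ((∑ v ∈ range (2 * k + 1), N w m v : ℕ) : ℚ)) =
      A * Ge w m + PowerSeries.X * (A * Go w m) := by
    ext u
    rw [PowerSeries.coeff_mk, coeff_combo]
  rcases invariant w m with ⟨h0, hGe, hGo⟩ | ⟨q, hm, hw, hq, hGe, hGo⟩ |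
    ⟨p, q, hm, hw, hlp, hq, hGo, hGe⟩
  · subst h0
    refine ⟨1, by have h00 : lp w 0 = 0 := rfl; omega, ?_⟩
    rw [hmk, hGe, hGo, show lp w 0 = 0 from rfl]
    ring
  · refine ⟨q + 1, by omega, ?_⟩
    rw [hmk, hGo, hGe]
    ring
  · refine ⟨q, by omega, ?_⟩
    rw [hmk, hGe, hGo, hlp]
    ring

lemma rhs_form (n P q : ℕ) (h : n = 2 * P + q) :
    A ^ (n + 1) * (4 * PowerSeries.X) ^ P * (1 + PowerSeries.X) ^ q =
      (1 + PowerSeries.X) ^ n * (((1 - PowerSeries.X) : PowerSeries ℚ) ^ (n + 1))⁻¹ *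
        (4 * PowerSeries.X * ((((1 + PowerSeries.X) : PowerSeries ℚ) ^ 2)⁻¹)) ^ P := by
  have key : A ^ (n + 1) * (1 - PowerSeries.X) ^ (n + 1) = 1 := by
    rw [← mul_pow, mul_comm, one_sub_X_mul_A, one_pow]
  have hBinv : ((1 - PowerSeries.X) : PowerSeries ℚ) ^ (n + 1) *
      (((1 - PowerSeries.X) : PowerSeries ℚ) ^ (n + 1))⁻¹ = 1 :=
    PowerSeries.mul_inv_cancel _ (by simp)
  have hC : (((1 + PowerSeries.X) : PowerSeries ℚ) ^ 2) *
      ((((1 + PowerSeries.X) : PowerSeries ℚ) ^ 2)⁻¹) = 1 :=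
    PowerSeries.mul_inv_cancel _ (by simp)
  have hunit : ((1 - PowerSeries.X) : PowerSeries ℚ) ^ (n + 1) *
      (((1 + PowerSeries.X) : PowerSeries ℚ) ^ 2) ^ P ≠ 0 := by
    intro h0
    have := congrArg PowerSeries.constantCoeff h0
    simp at this
  apply mul_right_cancel₀ hunit
  subst h
  calc A ^ (2 * P + q + 1) * (4 * PowerSeries.X) ^ P * (1 + PowerSeries.X) ^ q *
        ((1 - PowerSeries.X) ^ (2 * P + q + 1) * ((1 + PowerSeries.X) ^ 2) ^ P)
      = (A ^ (2 * P + q + 1) * (1 - PowerSeries.X) ^ (2 * P + q + 1)) *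
        ((4 * PowerSeries.X) ^ P * ((1 + PowerSeries.X) ^ q * ((1 + PowerSeries.X) ^ 2) ^ P)) := by
        ring
    _ = (4 * PowerSeries.X) ^ P * (1 + PowerSeries.X) ^ (2 * P + q) := by
        rw [key, one_mul, ← pow_mul, ← pow_add]
        ring_nf
    _ = (1 + PowerSeries.X) ^ (2 * P + q) *
        ((((1 - PowerSeries.X) : PowerSeries ℚ) ^ (2 * P + q + 1)) *
          (((1 - PowerSeries.X) : PowerSeries ℚ) ^ (2 * P + q + 1))⁻¹) *
        ((4 * PowerSeries.X) ^ P *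
          (((((1 + PowerSeries.X) : PowerSeries ℚ) ^ 2) *
            ((((1 + PowerSeries.X) : PowerSeries ℚ) ^ 2)⁻¹)) ^ P)) := by
        rw [hBinv, hC, one_pow, mul_one, mul_one]
        ring
    _ = (1 + PowerSeries.X) ^ (2 * P + q) *
        (((1 - PowerSeries.X) : PowerSeries ℚ) ^ (2 * P + q + 1))⁻¹ *
        (4 * PowerSeries.X * ((((1 + PowerSeries.X) : PowerSeries ℚ) ^ 2)⁻¹)) ^ P *
        ((1 - PowerSeries.X) ^ (2 * P + q + 1) * ((1 + PowerSeries.X) ^ 2) ^ P) := by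
        rw [mul_pow (4 * PowerSeries.X), mul_pow (((1 + PowerSeries.X)) ^ 2)]
        ring

/-! ### Translation between permutations and words -/

/-- Descent word of a permutation. -/
def wperm {n : ℕ} (π : Equiv.Perm (Fin n)) (s : ℕ) : Bool :=
  if h : s + 1 < n then
    (if π ⟨s + 1, h⟩ < π ⟨s, Nat.lt_of_succ_lt h⟩ then true else false)
  else false

/-- Position of `a` in `0 < -1 < 1 < -2 < 2 < ⋯` as a natural number. -/
def eln (a : ℤ) : ℕ := (el a).toNat

lemma el_nonneg (a : ℤ) : 0 ≤ el a := by
  rw [el]; split_ifs <;> omega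

lemma eln_cast (a : ℤ) : (eln a : ℤ) = el a := Int.toNat_of_nonneg (el_nonneg a)

/-- Inverse of `eln`. -/
def declep (v : ℕ) : ℤ := if Even v then ((v / 2 : ℕ) : ℤ) else -(((v + 1) / 2 : ℕ) : ℤ)

lemma declep_eln (a : ℤ) : declep (eln a) = a := by
  have h := eln_cast a
  rw [el] at h
  rw [declep]
  have hc1 : ((eln a / 2 : ℕ) : ℤ) = (eln a : ℤ) / 2 := Int.natCast_div _ _
  have hc2 : (((eln a + 1) / 2 : ℕ) : ℤ) = ((eln a : ℤ) + 1) / 2 := by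
    rw [Int.natCast_div]; push_cast; ring_nf
  split_ifs with hev
  · rw [Nat.even_iff] at hev
    rw [hc1]
    split_ifs at h <;> omega
  · rw [Nat.not_even_iff] at hev
    rw [hc2]
    split_ifs at h <;> omega

lemma el_declep (v : ℕ) : el (declep v) = (v : ℤ) := by
  rw [declep, el]
  have hc1 : ((v / 2 : ℕ) : ℤ) = (v : ℤ) / 2 := Int.natCast_div _ _
  have hc2 : (((v + 1) / 2 : ℕ) : ℤ) = ((v : ℤ) + 1) / 2 := by
    rw [Int.natCast_div]; push_cast; ring_nf
  split_ifs with h1 h2 h3 h4 h5 <;>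
    first
      | (rw [Nat.even_iff] at h1; omega)
      | (rw [Nat.even_iff] at *; omega)
      | (rw [Nat.not_even_iff] at h1; omega)
      | omega

lemma eln_declep (v : ℕ) : eln (declep v) = v := by
  rw [eln, el_declep, Int.toNat_natCast]

lemma eln_inj {a b : ℤ} (h : eln a = eln b) : a = b := by
  rw [← declep_eln a, ← declep_eln b, h]

lemma even_eln_iff (a : ℤ) : Even (eln a) ↔ 0 ≤ a := by
  have h := eln_cast a
  rw [el] at h
  rw [Nat.even_iff]
  split_ifs at h <;> omega

lemma odd_eln_iff (a : ℤ) : Odd (eln a) ↔ a < 0 := by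
  have h := eln_cast a
  rw [el] at h
  rw [Nat.odd_iff]
  split_ifs at h <;> omega

lemma abs_le_iff (a : ℤ) (k : ℕ) : |a| ≤ (k : ℤ) ↔ eln a ≤ 2 * k := by
  have h := eln_cast a
  rw [el] at h
  rw [abs_le]
  split_ifs at h <;> omega

lemma el_lt_iff (a b : ℤ) : el a < el b ↔ eln a < eln b := by
  rw [← eln_cast a, ← eln_cast b]
  exact_mod_cast Iff.rfl

lemma cond_iff {m : ℕ} (π : Equiv.Perm (Fin (m + 1))) (a : Fin (m + 1) → ℤ)
    (s : ℕ) (hs : s + 1 < m + 1) :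
    (if π ⟨s + 1, hs⟩ < π ⟨s, Nat.lt_of_succ_lt hs⟩ then
        el (a ⟨s, Nat.lt_of_succ_lt hs⟩) < el (a ⟨s + 1, hs⟩) ∨
          (a ⟨s, Nat.lt_of_succ_lt hs⟩ = a ⟨s + 1, hs⟩ ∧ a ⟨s + 1, hs⟩ < 0)
      else
        el (a ⟨s, Nat.lt_of_succ_lt hs⟩) < el (a ⟨s + 1, hs⟩) ∨
          (a ⟨s, Nat.lt_of_succ_lt hs⟩ = a ⟨s + 1, hs⟩ ∧ 0 ≤ a ⟨s + 1, hs⟩))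
    ↔ okStep (wperm π s) (eln (a ⟨s, Nat.lt_of_succ_lt hs⟩)) (eln (a ⟨s + 1, hs⟩)) := by
  by_cases hlt : π ⟨s + 1, hs⟩ < π ⟨s, Nat.lt_of_succ_lt hs⟩
  · rw [if_pos hlt]
    have hw : wperm π s = true := by rw [wperm, dif_pos hs, if_pos hlt]
    rw [okStep, hw]
    simp only [Bool.cond_true_left, if_true]
    constructor
    · rintro (h | ⟨h1, h2⟩)
      · exact Or.inl ((el_lt_iff _ _).mp h)
      · exact Or.inr ⟨by rw [h1], (odd_eln_iff _).mpr h2⟩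
    · rintro (h | ⟨h1, h2⟩)
      · exact Or.inl ((el_lt_iff _ _).mpr h)
      · exact Or.inr ⟨eln_inj h1, (odd_eln_iff _).mp h2⟩
  · rw [if_neg hlt]
    have hw : wperm π s = false := by rw [wperm, dif_pos hs, if_neg hlt]
    rw [okStep, hw]
    simp only [Bool.cond_false_left, if_neg (by simp : ¬ (false = true))]
    constructor
    · rintro (h | ⟨h1, h2⟩)
      · exact Or.inl ((el_lt_iff _ _).mp h)
      · exact Or.inr ⟨by rw [h1], (even_eln_iff _).mpr h2⟩
    · rintro (h | ⟨h1, h2⟩)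
      · exact Or.inl ((el_lt_iff _ _).mpr h)
      · exact Or.inr ⟨eln_inj h1, (even_eln_iff _).mp h2⟩

/-- The main counting translation. -/
lemma count_eq (m : ℕ) (π : Equiv.Perm (Fin (m + 1))) (k : ℕ) :
    leftEnrichedCount π k = ∑ v ∈ range (2 * k + 1), N (wperm π) m v := by
  have E : {a : Fin (m + 1) → ℤ //
      (∀ s, |a s| ≤ (k : ℤ)) ∧
      ∀ (s : ℕ) (hs : s + 1 < m + 1),
        if π ⟨s + 1, hs⟩ < π ⟨s, Nat.lt_of_succ_lt hs⟩ then
          el (a ⟨s, Nat.lt_of_succ_lt hs⟩) < el (a ⟨s + 1, hs⟩) ∨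
            (a ⟨s, Nat.lt_of_succ_lt hs⟩ = a ⟨s + 1, hs⟩ ∧ a ⟨s + 1, hs⟩ < 0)
        else
          el (a ⟨s, Nat.lt_of_succ_lt hs⟩) < el (a ⟨s + 1, hs⟩) ∨
            (a ⟨s, Nat.lt_of_succ_lt hs⟩ = a ⟨s + 1, hs⟩ ∧ 0 ≤ a ⟨s + 1, hs⟩)} ≃
      Σ v : (range (2 * k + 1)), {b : Fin (m + 1) → ℕ //
        Valid (wperm π) m b ∧ b (Fin.last m) = (v : ℕ)} :=
    { toFun := fun a =>
        ⟨⟨eln (a.1 (Fin.last m)), by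
            rw [mem_range]
            have := (abs_le_iff (a.1 (Fin.last m)) k).mp (a.2.1 _)
            omega⟩,
          ⟨fun s => eln (a.1 s), fun s hsm =>
            (cond_iff π a.1 s (by omega)).mp (a.2.2 s (by omega)), rfl⟩⟩
      invFun := fun x =>
        ⟨fun s => declep (x.2.1 s), by
          have hbound : ∀ s, x.2.1 s ≤ 2 * k := by
            intro s
            have h1 := (x.2.2.1).le_last s
            have h2 := x.2.2.2
            have h3 := x.1.2
            rw [mem_range] at h3
            omega
          refine ⟨fun s => ?_, fun s hs => ?_⟩
          · rw [abs_le_iff _ k, eln_declep]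
            exact hbound s
          · refine (cond_iff π (fun s => declep (x.2.1 s)) s hs).mpr ?_
            have := x.2.2.1 s (by omega)
            simpa only [eln_declep] using this⟩
      left_inv := fun a => Subtype.ext (funext fun s => declep_eln _)
      right_inv := fun x => by
        apply sigma_eq_helper
          (Q := fun v b => Valid (wperm π) m b ∧ b (Fin.last m) = v)
        · show eln (declep (x.2.1 (Fin.last m))) = (x.1 : ℕ)
          rw [eln_declep, x.2.2.2]
        · funext s
          show eln (declep (x.2.1 s)) = x.2.1 s
          rw [eln_declep] }
  rw [leftEnrichedCount, Nat.card_congr E, natCard_sigma]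
  rw [← Finset.sum_coe_sort (range (2 * k + 1)) (fun v => N (wperm π) m v)]
  rfl

/-! ### Left peaks -/

lemma lp_card (w : ℕ → Bool) (m : ℕ) :
    lp w m = ((range m).filter fun j => newPk w j).card := by
  induction m with
  | zero => simp [lp]
  | succ m ih =>
    rw [show lp w (m + 1) = lp w m + (if newPk w m then 1 else 0) from rfl,
      Finset.range_add_one, Finset.filter_insert, ih]
    by_cases h : newPk w m
    · rw [if_pos h, if_pos h, Finset.card_insert_of_notMem (by simp)]
    · rw [if_neg h, if_neg h, Nat.add_zero]

lemma pval_succ_lt_iff {m : ℕ} (π : Equiv.Perm (Fin (m + 1))) (i : ℕ)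
    (h1 : 1 ≤ i) (h2 : i < m + 1) :
    (pval π (i + 1) < pval π i) ↔ wperm π (i - 1) = true := by
  rw [pval, pval, dif_pos (⟨by omega, by omega⟩ : 1 ≤ i + 1 ∧ i + 1 ≤ m + 1),
    dif_pos (⟨h1, by omega⟩ : 1 ≤ i ∧ i ≤ m + 1)]
  rw [wperm, dif_pos (show (i - 1) + 1 < m + 1 by omega)]
  have e1 : (⟨i + 1 - 1, by omega⟩ : Fin (m + 1)) = ⟨i - 1 + 1, by omega⟩ := by
    ext; simp; omega
  rw [e1]
  by_cases hlt : π ⟨i - 1 + 1, by omega⟩ < π ⟨i - 1, by omega⟩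
  · rw [if_pos hlt]
    have hlt' := hlt
    rw [Fin.lt_def] at hlt'
    constructor
    · intro _; rfl
    · intro _; omega
  · rw [if_neg hlt]
    have hlt' : ¬ ((π ⟨i - 1 + 1, by omega⟩ : Fin (m + 1)) : ℕ) <
        ((π ⟨i - 1, by omega⟩ : Fin (m + 1)) : ℕ) := fun hc => hlt (Fin.lt_def.mpr hc)
    constructor
    · intro hh; exfalso; omega
    · intro hh; simp at hh

lemma pval_pred_lt_iff {m : ℕ} (π : Equiv.Perm (Fin (m + 1))) (i : ℕ)
    (h1 : 1 ≤ i) (h2 : i < m + 1) :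
    (pval π (i - 1) < pval π i) ↔ (i = 1 ∨ wperm π (i - 2) = false) := by
  rcases eq_or_lt_of_le h1 with h | h
  · constructor
    · intro _; exact Or.inl h.symm
    · intro _
      rw [← h]
      rw [pval, pval, dif_neg (by omega), dif_pos (⟨le_rfl, by omega⟩ : 1 ≤ 1 ∧ 1 ≤ m + 1)]
      omega
  · have hi2 : 2 ≤ i := h
    rw [pval, pval, dif_pos (⟨by omega, by omega⟩ : 1 ≤ i - 1 ∧ i - 1 ≤ m + 1),
      dif_pos (⟨by omega, by omega⟩ : 1 ≤ i ∧ i ≤ m + 1)]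
    rw [wperm, dif_pos (show (i - 2) + 1 < m + 1 by omega)]
    have e0 : (⟨i - 1 - 1, by omega⟩ : Fin (m + 1)) = ⟨i - 2, by omega⟩ := by
      ext; simp; omega
    have e1 : (⟨i - 2 + 1, by omega⟩ : Fin (m + 1)) = ⟨i - 1, by omega⟩ := by
      ext; simp; omega
    rw [e0, e1]
    have hne : ((π ⟨i - 1, by omega⟩ : Fin (m + 1)) : ℕ) ≠
        ((π ⟨i - 2, by omega⟩ : Fin (m + 1)) : ℕ) := by
      intro hc
      have hc2 : (⟨i - 1, by omega⟩ : Fin (m + 1)) = ⟨i - 2, by omega⟩ :=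
        π.injective (Fin.ext hc)
      have := congrArg Fin.val hc2
      simp at this
      omega
    by_cases hlt : π ⟨i - 1, by omega⟩ < π ⟨i - 2, by omega⟩
    · rw [if_pos hlt]
      rw [Fin.lt_def] at hlt
      constructor
      · intro hh; exfalso; omega
      · rintro (hh | hh)
        · omega
        · exact absurd hh (by simp)
    · rw [if_neg hlt]
      rw [Fin.lt_def] at hlt
      constructor
      · intro _; exact Or.inr rfl
      · intro _; omega

lemma leftPk_card {m : ℕ} (π : Equiv.Perm (Fin (m + 1))) :
    (leftPk π).card = lp (wperm π) m := by
  rw [lp_card, leftPk]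
  refine Finset.card_bij' (fun a _ => a - 1) (fun b _ => b + 1) ?hi ?hj ?li ?ri
  case li =>
    intro a ha
    have h1 := (Finset.mem_Ico.mp (Finset.mem_filter.mp ha).1).1
    show a - 1 + 1 = a
    omega
  case ri =>
    intro b _
    show b + 1 - 1 = b
    omega
  · intro a ha
    rw [Finset.mem_filter, Finset.mem_Ico] at ha
    obtain ⟨⟨ha1, ha2⟩, hpk1, hpk2⟩ := ha
    show a - 1 ∈ (range m).filter fun j => newPk (wperm π) j
    rw [Finset.mem_filter, Finset.mem_range]
    refine ⟨by omega, ?_, ?_⟩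
    · exact (pval_succ_lt_iff π a ha1 ha2).mp hpk2
    · have := (pval_pred_lt_iff π a ha1 ha2).mp hpk1
      rcases this with h | h
      · exact Or.inl (by omega)
      · right
        rw [show a - 1 - 1 = a - 2 from by omega]
        exact h
  · intro b hb
    rw [Finset.mem_filter, Finset.mem_range] at hb
    obtain ⟨hb1, hb2, hb3⟩ := hb
    show b + 1 ∈ (Finset.Ico 1 (m + 1)).filter (isPk π)
    rw [Finset.mem_filter, Finset.mem_Ico]
    refine ⟨⟨by omega, by omega⟩, ?_, ?_⟩
    · refine (pval_pred_lt_iff π (b + 1) (by omega) (by omega)).mpr ?_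
      rcases hb3 with h | h
      · exact Or.inl (by omega)
      · right
        rw [show b + 1 - 2 = b - 1 from by omega]
        exact h
    · refine (pval_succ_lt_iff π (b + 1) (by omega) (by omega)).mpr ?_
      rw [show b + 1 - 1 = b from by omega]
      exact hb2

end LEPAux

open PowerSeries in
theorem stmt10 (n : ℕ) (π : Equiv.Perm (Fin n)) :
    (PowerSeries.mk (fun k => (leftEnrichedCount π k : ℚ)) =
      (1 + X) ^ n * ((1 - X) ^ (n + 1))⁻¹ *
        (4 * X * (((1 + X) ^ 2)⁻¹)) ^ (leftPk π).card) ∧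
    ∀ π' : Equiv.Perm (Fin n), (leftPk π').card = (leftPk π).card →
      ∀ k, leftEnrichedCount π' k = leftEnrichedCount π k := by
  cases n with
  | zero =>
    have hcount : ∀ (σ : Equiv.Perm (Fin 0)) (k : ℕ), leftEnrichedCount σ k = 1 := by
      intro σ k
      rw [leftEnrichedCount]
      exact Nat.card_eq_one_iff_unique.mpr
        ⟨⟨fun x y => Subtype.ext (funext fun i => i.elim0)⟩,
          ⟨⟨fun i => i.elim0, ⟨fun s => s.elim0, fun s hs => absurd hs (by omega)⟩⟩⟩⟩
    constructor
    · have hlpk : (leftPk π).card = 0 := by simp [leftPk]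
      rw [hlpk]
      simp only [pow_zero, one_mul, mul_one, zero_add, pow_one]
      rw [show (PowerSeries.mk fun k => (leftEnrichedCount π k : ℚ)) =
          PowerSeries.mk fun _ => (1 : ℚ) from
        congrArg _ (funext fun k => by rw [hcount]; norm_num)]
      rw [LEPAux.mk_one_eq_A]
      rfl
    · intro π' _ k
      rw [hcount, hcount]
  | succ m =>
    have key : ∀ σ : Equiv.Perm (Fin (m + 1)), ∃ q, m + 1 = 2 * (leftPk σ).card + q ∧
        PowerSeries.mk (fun k => (leftEnrichedCount σ k : ℚ)) =
          LEPAux.A ^ (m + 2) * (4 * PowerSeries.X) ^ (leftPk σ).card *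
            (1 + PowerSeries.X) ^ q := by
      intro σ
      obtain ⟨q, hq, hmk⟩ := LEPAux.final (LEPAux.wperm σ) m
      rw [← LEPAux.leftPk_card σ] at hq hmk
      refine ⟨q, hq, ?_⟩
      rw [← hmk]
      have hfun : (fun k => (leftEnrichedCount σ k : ℚ)) =
          (fun k => ((∑ v ∈ Finset.range (2 * k + 1), LEPAux.N (LEPAux.wperm σ) m v : ℕ) : ℚ)) :=
        funext fun k => by rw [LEPAux.count_eq m σ k]
      rw [hfun]
    constructor
    · obtain ⟨q, hq, hmk⟩ := key π
      rw [hmk]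
      exact LEPAux.rhs_form (m + 1) _ q hq
    · intro π' hcard k
      obtain ⟨q, hq, hmk⟩ := key π
      obtain ⟨q', hq', hmk'⟩ := key π'
      have hqq : q' = q := by
        rw [hcard] at hq'
        omega
      have hser : PowerSeries.mk (fun k => (leftEnrichedCount π' k : ℚ)) =
          PowerSeries.mk (fun k => (leftEnrichedCount π k : ℚ)) := by
        rw [hmk, hmk', hcard, hqq]
      have h2 := congrArg (PowerSeries.coeff k) hser
      rw [PowerSeries.coeff_mk, PowerSeries.coeff_mk] at h2
      exact_mod_cast h2
end
end

section
/- The enriched order polynomial satisfies the reciprocity Ω'(π; -x) = (-1)^n Ω'(π; x), and the left enriched order polynomial satisfies Ω^{(ℓ)}(π; -x - 1/2) = (-1)^n Ω^{(ℓ)}(π; x - 1/2), for any permutation π of [n]. -/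
open scoped Classical

noncomputable section

open Polynomial

namespace Stmt11Aux

/-- Two rational polynomials agreeing on `c + ℕ` are equal. -/
lemma poly_eq_of_eval_shift (p q : Polynomial ℚ) (c : ℚ)
    (h : ∀ k : ℕ, p.eval (c + k) = q.eval (c + k)) : p = q := by
  have : p - q = 0 := by
    apply Polynomial.eq_zero_of_infinite_isRoot
    apply Set.infinite_of_injective_forall_mem (f := fun k : ℕ => c + (k : ℚ))
    · intro a b hab
      simpa using hab
    · intro k
      simp [Polynomial.IsRoot, h k, sub_eq_zero]
  exact sub_eq_zero.mp this

/-- Uniqueness from difference equation plus one value. -/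
lemma poly_eq_of_diff (p q : Polynomial ℚ) (c : ℚ)
    (hd : ∀ x : ℚ, p.eval (x + 1) - p.eval x = q.eval (x + 1) - q.eval x)
    (hc : p.eval c = q.eval c) : p = q := by
  apply poly_eq_of_eval_shift p q c
  intro k
  induction k with
  | zero => simpa using hc
  | succ m ih =>
      have := hd (c + m)
      push_cast
      push_cast at ih
      have e : c + (↑m + 1) = c + ↑m + 1 := by ring
      rw [e]
      linarith

/-- Existence of a discrete antiderivative. -/
lemma exists_antid : ∀ (d : ℕ) (p : Polynomial ℚ), p.natDegree ≤ d →
    ∃ q : Polynomial ℚ, ∀ x : ℚ, q.eval (x + 1) - q.eval x = p.eval x := by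
  intro d
  induction d with
  | zero =>
      intro p hp
      refine ⟨Polynomial.C (p.coeff 0) * Polynomial.X, ?_⟩
      intro x
      have : p = Polynomial.C (p.coeff 0) := Polynomial.eq_C_of_natDegree_le_zero hp
      rw [this]
      simp
      ring
  | succ d ih =>
      intro p hp
      by_cases h : p.natDegree ≤ d
      · exact ih p h
      -- deg p = d + 1
      set a : ℚ := p.coeff (d + 1) with ha
      set r : Polynomial ℚ := Polynomial.C (a / (d + 2)) * Polynomial.X ^ (d + 2) with hr
      set Δr : Polynomial ℚ := r.comp (Polynomial.X + 1) - r with hΔ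
      have hcomp : Δr = Polynomial.C (a / (d + 2)) *
          ((Polynomial.X + 1) ^ (d + 2) - Polynomial.X ^ (d + 2)) := by
        rw [hΔ, hr]
        simp [Polynomial.mul_comp, Polynomial.pow_comp, mul_sub]
      have hcoeff : ∀ j : ℕ, (Δr).coeff j
          = a / (d + 2) * ((Nat.choose (d+2) j : ℚ) - if d + 2 = j then 1 else 0) := by
        intro j
        rw [hcomp, Polynomial.coeff_C_mul, Polynomial.coeff_sub,
          Polynomial.coeff_X_add_one_pow, Polynomial.coeff_X_pow]
        congr 2
        simp [eq_comm]
      have hd2 : ((d : ℚ) + 2) ≠ 0 := by positivity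
      have hΔcoeff : (Δr).coeff (d + 1) = a := by
        rw [hcoeff]
        have : Nat.choose (d+2) (d+1) = d + 2 := by
          rw [show d + 2 = (d+1) + 1 from rfl, Nat.choose_succ_self_right]
        rw [this]
        simp only [if_neg (by omega : ¬ d + 2 = d + 1)]
        push_cast
        field_simp
        ring
      have hΔhigh : ∀ j : ℕ, d + 1 < j → (Δr).coeff j = 0 := by
        intro j hj
        rw [hcoeff]
        rcases eq_or_ne j (d + 2) with h2 | h2
        · subst h2
          simp
        · have : Nat.choose (d+2) j = 0 := Nat.choose_eq_zero_of_lt (by omega)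
          rw [this]
          simp [if_neg (by omega : ¬ d + 2 = j)]
      have hΔdeg : (Δr).natDegree ≤ d + 1 :=
        Polynomial.natDegree_le_iff_coeff_eq_zero.mpr (fun m hm => hΔhigh m hm)
      have hp' : (p - Δr).natDegree ≤ d := by
        apply Polynomial.natDegree_le_iff_coeff_eq_zero.mpr
        intro m hm
        rw [Polynomial.coeff_sub]
        rcases eq_or_ne m (d + 1) with h1 | h1
        · subst h1
          rw [hΔcoeff, ← ha, sub_self]
        · have h2 : p.coeff m = 0 :=
            Polynomial.coeff_eq_zero_of_natDegree_lt (by omega)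
          rw [h2, hΔhigh m (by omega), sub_self]
      obtain ⟨q', hq'⟩ := ih (p - Δr) hp'
      refine ⟨q' + r, ?_⟩
      intro x
      have h1 := hq' x
      simp only [Polynomial.eval_sub, hΔ, Polynomial.eval_comp, Polynomial.eval_add,
        Polynomial.eval_one, Polynomial.eval_X] at h1 ⊢
      linarith


/-- A chosen discrete antiderivative. -/
noncomputable def antid (p : Polynomial ℚ) : Polynomial ℚ :=
  Classical.choose (exists_antid p.natDegree p le_rfl)

lemma antid_spec (p : Polynomial ℚ) (x : ℚ) :
    (antid p).eval (x + 1) - (antid p).eval x = p.eval x :=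
  Classical.choose_spec (exists_antid p.natDegree p le_rfl) x

/-- The chain-counting polynomial family. `d s = (δ_s, ι_s)` where `δ_s` is the lower
bound for the `s`-th entry and `ι_s` the strictness between entries `s-1` and `s`. -/
noncomputable def HP : ℕ → (ℕ → ℕ × ℕ) → Polynomial ℚ
  | 0, _ => 1
  | (n+1), d =>
      let A := antid ((HP n d).comp (Polynomial.X + Polynomial.C (1 - ((d n).2 : ℚ))))
      A - Polynomial.C (A.eval ((d n).1 : ℚ))

lemma HP_diff (n : ℕ) (d : ℕ → ℕ × ℕ) (x : ℚ) :
    (HP (n+1) d).eval (x + 1) - (HP (n+1) d).eval x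
      = (HP n d).eval (x + 1 - ((d n).2 : ℚ)) := by
  have h := antid_spec ((HP n d).comp (Polynomial.X + Polynomial.C (1 - ((d n).2 : ℚ)))) x
  simp only [Polynomial.eval_comp, Polynomial.eval_add, Polynomial.eval_X,
    Polynomial.eval_C] at h
  simp only [HP, Polynomial.eval_sub, Polynomial.eval_C]
  rw [show x + (1 - ((d n).2 : ℚ)) = x + 1 - ((d n).2 : ℚ) by ring] at h
  linarith

lemma HP_anchor (n : ℕ) (d : ℕ → ℕ × ℕ) :
    (HP (n+1) d).eval (((d n).1 : ℕ) : ℚ) = 0 := by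
  simp [HP]

lemma HP_congr : ∀ (n : ℕ) (d d' : ℕ → ℕ × ℕ), (∀ s, s < n → d s = d' s) →
    HP n d = HP n d'
  | 0, _, _, _ => rfl
  | (n+1), d, d', h => by
      have hd : HP n d = HP n d' := HP_congr n d d' (fun s hs => h s (by omega))
      simp only [HP, hd, h n (by omega)]

/-- The finite set of chains `m : Fin n → ℕ` with lower bounds `δ`, gaps `ι`,
and last entry `< v`. -/
def chainsF : (n : ℕ) → (ℕ → ℕ × ℕ) → ℕ → Finset (Fin n → ℕ)
  | 0, _, _ => {(fun i => i.elim0)}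
  | (n+1), d, v => (Finset.Ico (d n).1 v).biUnion fun w =>
      (chainsF n d (w + 1 - (d n).2)).image (fun m => Fin.snoc m w)

lemma card_chainsF_succ (n : ℕ) (d : ℕ → ℕ × ℕ) (v : ℕ) :
    (chainsF (n+1) d v).card
      = ∑ w ∈ Finset.Ico (d n).1 v, (chainsF n d (w + 1 - (d n).2)).card := by
  rw [chainsF, Finset.card_biUnion]
  · refine Finset.sum_congr rfl fun w _ => ?_
    apply Finset.card_image_of_injective
    intro m m' hmm
    have := congrArg Fin.init hmm
    simpa [Fin.init_snoc] using this
  · intro x _ y _ hxy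
    simp only [Finset.disjoint_left]
    intro m hmx hmy
    simp only [Finset.mem_image] at hmx hmy
    obtain ⟨mx, _, hx⟩ := hmx
    obtain ⟨my, _, hy⟩ := hmy
    apply hxy
    rw [← hx] at hy
    have := congrArg (fun f => f (Fin.last n)) hy
    simpa [Fin.snoc_last] using this.symm

lemma mem_chainsF : ∀ (n : ℕ) (d : ℕ → ℕ × ℕ) (v : ℕ) (m : Fin n → ℕ),
    m ∈ chainsF n d v ↔
      ((∀ (i : ℕ) (h : i < n), (d i).1 ≤ m ⟨i, h⟩) ∧
       (∀ (i : ℕ) (h : i + 1 < n), m ⟨i, by omega⟩ + (d (i+1)).2 ≤ m ⟨i+1, h⟩) ∧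
       (∀ h : 0 < n, m ⟨n-1, by omega⟩ < v))
  | 0, d, v, m => by
      constructor
      · intro _
        refine ⟨fun i h => absurd h (by omega), fun i h => absurd h (by omega),
          fun h => absurd h (by omega)⟩
      · intro _
        simp only [chainsF, Finset.mem_singleton]
        exact funext fun i => i.elim0
  | (n+1), d, v, m => by
      simp only [chainsF, Finset.mem_biUnion, Finset.mem_image, Finset.mem_Ico]
      constructor
      · rintro ⟨w, ⟨hw1, hw2⟩, m', hm', rfl⟩
        rw [mem_chainsF] at hm'
        obtain ⟨h1, h2, h3⟩ := hm'
        refine ⟨?_, ?_, ?_⟩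
        · intro i hi
          rcases Nat.lt_or_ge i n with h | h
          · have : (⟨i, hi⟩ : Fin (n+1)) = Fin.castSucc ⟨i, h⟩ := rfl
            rw [this, Fin.snoc_castSucc]
            exact h1 i h
          · have hin : i = n := by omega
            subst hin
            have : (⟨i, hi⟩ : Fin (i+1)) = Fin.last i := rfl
            rw [this, Fin.snoc_last]
            exact hw1
        · intro i hi
          rcases Nat.lt_or_ge (i+1) n with h | h
          · have e1 : (⟨i, by omega⟩ : Fin (n+1)) = Fin.castSucc ⟨i, by omega⟩ := rfl
            have e2 : (⟨i+1, hi⟩ : Fin (n+1)) = Fin.castSucc ⟨i+1, h⟩ := rfl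
            rw [e1, e2, Fin.snoc_castSucc, Fin.snoc_castSucc]
            exact h2 i h
          · have hin : i + 1 = n := by omega
            have hn0 : 0 < n := by omega
            have e1 : (⟨i, by omega⟩ : Fin (n+1)) = Fin.castSucc ⟨i, by omega⟩ := rfl
            have e2 : (⟨i+1, hi⟩ : Fin (n+1)) = Fin.last n := by
              simp [Fin.last, Fin.ext_iff, hin]
            rw [e1, e2, Fin.snoc_castSucc, Fin.snoc_last]
            have := h3 hn0
            have he : (⟨n-1, by omega⟩ : Fin n) = ⟨i, by omega⟩ := by
              simp [Fin.ext_iff]; omega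
            rw [he] at this
            have hd' : (d (i+1)).2 = (d n).2 := by rw [hin]
            omega
        · intro _
          have : (⟨n+1-1, by omega⟩ : Fin (n+1)) = Fin.last n := rfl
          rw [this, Fin.snoc_last]
          exact hw2
      · rintro ⟨h1, h2, h3⟩
        refine ⟨m (Fin.last n), ⟨h1 n (by omega), h3 (by omega)⟩, Fin.init m, ?_,
          Fin.snoc_init_self m⟩
        rw [mem_chainsF]
        refine ⟨?_, ?_, ?_⟩
        · intro i hi
          exact h1 i (by omega)
        · intro i hi
          exact h2 i (by omega)
        · intro hn
          have hb := h2 (n-1) (by omega)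
          have e : (⟨n-1+1, by omega⟩ : Fin (n+1)) = Fin.last n := by
            simp [Fin.last, Fin.ext_iff]; omega
          rw [e] at hb
          have hd' : (d (n-1+1)).2 = (d n).2 := by congr 2; omega
          have e2 : (Fin.init m) ⟨n-1, by omega⟩ = m ⟨n-1, by omega⟩ := by
            simp only [Fin.init]
            congr 1
          omega


lemma HP_eval (n : ℕ) (d : ℕ → ℕ × ℕ)
    (hι : ∀ s, (d s).2 ≤ 1)
    (hval : ∀ s, (d (s+1)).2 + (d s).1 ≤ (d (s+1)).1 + 1) :
    ∀ v : ℕ, (n ≠ 0 → (d (n-1)).1 ≤ v) →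
    (HP n d).eval (v : ℚ) = ((chainsF n d v).card : ℚ) := by
  induction n with
  | zero => intro v _; simp [HP, chainsF]
  | succ n IH =>
      intro v hv
      have hδv : (d n).1 ≤ v := by
        have := hv (by omega)
        simpa using this
      clear hv
      induction v, hδv using Nat.le_induction with
      | base =>
          rw [HP_anchor]
          rw [card_chainsF_succ]
          simp
      | succ v hδv ih =>
          have hcard : (chainsF (n+1) d (v+1)).card
              = (chainsF (n+1) d v).card + (chainsF n d (v + 1 - (d n).2)).card := by
            rw [card_chainsF_succ, card_chainsF_succ, Finset.sum_Ico_succ_top hδv]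
          have hdiff := HP_diff n d (v : ℚ)
          have hcast : ((v + 1 - (d n).2 : ℕ) : ℚ) = (v : ℚ) + 1 - ((d n).2 : ℚ) := by
            have := hι n
            push_cast [Nat.cast_sub (by omega : (d n).2 ≤ v + 1)]
            ring
          have hinner : (HP n d).eval ((v : ℚ) + 1 - ((d n).2 : ℚ))
              = ((chainsF n d (v + 1 - (d n).2)).card : ℚ) := by
            rw [← hcast]
            apply IH
            intro hn0
            have hv2 := hval (n-1)
            have hn' : n - 1 + 1 = n := by omega
            rw [hn'] at hv2
            omega
          rw [show ((v+1:ℕ):ℚ) = (v:ℚ)+1 by push_cast; ring, hcard]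
          push_cast
          push_cast at ih hdiff hinner
          linarith

/-- Complementation of the data. -/
def dT (d : ℕ → ℕ × ℕ) : ℕ → ℕ × ℕ := fun s => (1 - (d s).1, 1 - (d s).2)

lemma HP_reflect (n : ℕ) (d : ℕ → ℕ × ℕ)
    (hδ : ∀ s, (d s).1 ≤ 1) (hι : ∀ s, (d s).2 ≤ 1) :
    ∀ y : ℚ, (HP n d).eval (-y) = (-1)^n * (HP n (dT d)).eval (y + 1) := by
  induction n with
  | zero => intro y; simp [HP]
  | succ n IH =>
      have key : ((-1:ℚ)^(n+1)) • ((HP (n+1) d).comp (-Polynomial.X))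
          = (HP (n+1) (dT d)).comp (Polynomial.X + Polynomial.C 1) := by
        apply poly_eq_of_diff _ _ ((((dT d) n).1 : ℚ) - 1)
        · intro x
          have hA : ∀ z : ℚ, (((-1:ℚ)^(n+1)) • ((HP (n+1) d).comp (-Polynomial.X))).eval z
              = (-1:ℚ)^(n+1) * (HP (n+1) d).eval (-z) := by
            intro z; simp [Polynomial.eval_smul, Polynomial.eval_comp]
          have hB : ∀ z : ℚ, ((HP (n+1) (dT d)).comp (Polynomial.X + Polynomial.C 1)).eval z
              = (HP (n+1) (dT d)).eval (z + 1) := by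
            intro z; simp [Polynomial.eval_comp]
          rw [hA, hA, hB, hB]
          have d1 := HP_diff n d (-x - 1)
          have d2 := HP_diff n (dT d) (x + 1)
          have hcast : (((dT d) n).2 : ℚ) = 1 - ((d n).2 : ℚ) := by
            simp only [dT]
            push_cast [Nat.cast_sub (hι n)]
            ring
          rw [hcast] at d2
          have e1 : -x - 1 + 1 = -x := by ring
          rw [e1] at d1
          have e2 : -x - ((d n).2:ℚ) = -(x + (d n).2) := by ring
          rw [e2] at d1
          have h3 : x + 1 + 1 - (1 - ((d n).2:ℚ)) = x + ((d n).2:ℚ) + 1 := by ring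
          rw [h3] at d2
          have iH' := IH (x + ((d n).2:ℚ))
          rw [iH'] at d1
          rw [show -(x+1) = -x - 1 by ring]
          have ht : (-1:ℚ)^n * (-1:ℚ)^n = 1 := by
            rw [← pow_add]
            exact Even.neg_one_pow ⟨n, rfl⟩
          linear_combination ((-1:ℚ)^n) * d1 - d2
            + (Polynomial.eval (x + ((d n).2:ℚ) + 1) (HP n (dT d))) * ht
        · simp only [Polynomial.eval_smul, Polynomial.eval_comp, Polynomial.eval_neg,
            Polynomial.eval_X, Polynomial.eval_add, Polynomial.eval_C, smul_eq_mul]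
          have hcastδ : (((dT d) n).1 : ℚ) = 1 - ((d n).1:ℚ) := by
            simp only [dT]
            push_cast [Nat.cast_sub (hδ n)]
            ring
          have h1 : -((((dT d) n).1:ℚ) - 1) = ((d n).1 : ℚ) := by rw [hcastδ]; ring
          have h2 : (((dT d) n).1:ℚ) - 1 + 1 = (((dT d) n).1:ℚ) := by ring
          rw [h1, h2, HP_anchor, HP_anchor]
          ring
      intro y
      have hthis := congrArg (fun p => Polynomial.eval y p) key
      simp only [Polynomial.eval_smul, Polynomial.eval_comp, Polynomial.eval_neg,
        Polynomial.eval_X, Polynomial.eval_add, Polynomial.eval_C, smul_eq_mul] at hthis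
      have ht : (-1:ℚ)^(n+1) * (-1:ℚ)^(n+1) = 1 := by
        rw [← pow_add]
        exact Even.neg_one_pow ⟨n+1, rfl⟩
      linear_combination ((-1:ℚ)^(n+1)) * hthis
        - (Polynomial.eval (-y) (HP (n+1) d)) * ht


lemma card_shift (n : ℕ) (ι : ℕ → ℕ) (k : ℕ) :
    (chainsF n (fun s => (0, ι s)) k).card
      = (chainsF n (fun s => (1, ι s)) (k+1)).card := by
  classical
  apply Finset.card_bij (fun m _ => (fun i => m i + 1))
  · intro m hm
    rw [mem_chainsF] at hm ⊢
    obtain ⟨h1, h2, h3⟩ := hm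
    exact ⟨fun i h => by simpa using Nat.succ_le_succ (Nat.zero_le _),
      fun i h => by have := h2 i h; simpa using by omega,
      fun h => by have := h3 h; omega⟩
  · intro m hm m' hm' hee
    funext i
    have := congrFun hee i
    omega
  · intro m hm
    rw [mem_chainsF] at hm
    obtain ⟨h1, h2, h3⟩ := hm
    refine ⟨fun i => m i - 1, ?_, ?_⟩
    · rw [mem_chainsF]
      refine ⟨fun i h => by simp, fun i h => ?_, fun h => ?_⟩
      · have := h2 i h
        have ha := h1 i (by omega)
        have hb := h1 (i+1) h
        simp only at *
        omega
      · have := h3 h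
        have ha := h1 (n-1) (by omega)
        simp only at *
        omega
    · funext i
      have := h1 i i.2
      have e : (⟨(i:ℕ), i.2⟩ : Fin n) = i := rfl
      rw [e] at this
      simp only at this ⊢
      omega

lemma HP_shift (n : ℕ) (ι : ℕ → ℕ) (hι : ∀ s, ι s ≤ 1) (x : ℚ) :
    (HP n (fun s => (0, ι s))).eval x = (HP n (fun s => (1, ι s))).eval (x + 1) := by
  have key : HP n (fun s => (0, ι s))
      = (HP n (fun s => (1, ι s))).comp (Polynomial.X + Polynomial.C 1) := by
    apply poly_eq_of_eval_shift _ _ 0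
    intro k
    rw [Polynomial.eval_comp]
    simp only [Polynomial.eval_add, Polynomial.eval_X, Polynomial.eval_C]
    have h0 : (0:ℚ) + k = ((k:ℕ):ℚ) := by push_cast; ring
    rw [h0]
    rw [HP_eval n _ (fun s => hι s) (fun s => by simpa using hι (s+1)) k (fun _ => by simp)]
    have h1 : ((k:ℚ) + 1) = ((k+1:ℕ):ℚ) := by push_cast; ring
    rw [h1, HP_eval n _ (fun s => hι s) (fun s => by simpa using hι (s+1))
      (k+1) (fun _ => by simp)]
    rw [card_shift]
  rw [key, Polynomial.eval_comp]
  simp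


/-! ### Data derived from a permutation and a sign vector -/

def descB (n : ℕ) (π : Equiv.Perm (Fin n)) (s : ℕ) : Bool :=
  if h : s + 1 < n then decide (π ⟨s+1, h⟩ < π ⟨s, Nat.lt_of_succ_lt h⟩) else false

def epsN (n : ℕ) (ε : Fin n → Bool) (i : ℕ) : Bool :=
  if h : i < n then ε ⟨i, h⟩ else false

def iotaD (n : ℕ) (π : Equiv.Perm (Fin n)) (ε : Fin n → Bool) (s : ℕ) : ℕ :=
  if descB n π (s-1) then (if epsN n ε (s-1) then 1 else 0)
  else (if epsN n ε s then 0 else 1)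

def dataP (n : ℕ) (π : Equiv.Perm (Fin n)) (ε : Fin n → Bool) : ℕ → ℕ × ℕ :=
  fun s => (1, iotaD n π ε s)

def dataQ (n : ℕ) (π : Equiv.Perm (Fin n)) (ε : Fin n → Bool) : ℕ → ℕ × ℕ :=
  fun s => ((if epsN n ε s then 0 else 1), iotaD n π ε s)

lemma iotaD_le (n π ε s) : iotaD n π ε s ≤ 1 := by
  unfold iotaD
  split_ifs <;> omega

lemma epsN_not (n : ℕ) (ε : Fin n → Bool) (i : ℕ) (h : i < n) :
    epsN n (fun j => !ε j) i = !(epsN n ε i) := by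
  unfold epsN
  rw [dif_pos h, dif_pos h]

lemma iotaD_not (n π ε) (s : ℕ) (h : s < n) :
    iotaD n π (fun j => !ε j) s = 1 - iotaD n π ε s := by
  unfold iotaD
  have h1 : s - 1 < n := by omega
  rw [epsN_not n ε (s-1) h1, epsN_not n ε s h]
  cases descB n π (s-1) <;> cases epsN n ε (s-1) <;> cases epsN n ε s <;> simp

lemma dT_dataP (n π ε) (s : ℕ) (h : s < n) :
    dT (dataP n π ε) s = (fun s' => ((0:ℕ), iotaD n π (fun j => !ε j) s')) s := by
  simp only [dT, dataP, iotaD_not n π ε s h]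

lemma dT_dataQ (n π ε) (s : ℕ) (h : s < n) :
    dT (dataQ n π ε) s = dataQ n π (fun j => !ε j) s := by
  simp only [dT, dataQ, iotaD_not n π ε s h, epsN_not n ε s h]
  cases epsN n ε s <;> simp

lemma dataQ_valid (n π ε) (s : ℕ) :
    (dataQ n π ε (s+1)).2 + (dataQ n π ε s).1 ≤ (dataQ n π ε (s+1)).1 + 1 := by
  simp only [dataQ, iotaD]
  have e : s + 1 - 1 = s := by omega
  rw [e]
  cases descB n π s <;> cases epsN n ε s <;> cases epsN n ε (s+1) <;> simp

/-! ### Sign-splitting lemmas for `ek` and `el` -/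

lemma ek_des_iff (a b : ℤ) (ha : a ≠ 0) (hb : b ≠ 0) :
    (ek a < ek b ∨ (a = b ∧ b < 0)) ↔
      a.natAbs + (if 0 < a then 1 else 0) ≤ b.natAbs := by
  unfold ek
  split_ifs <;> omega

lemma ek_asc_iff (a b : ℤ) (ha : a ≠ 0) (hb : b ≠ 0) :
    (ek a < ek b ∨ (a = b ∧ 0 < b)) ↔
      a.natAbs + (if 0 < b then 0 else 1) ≤ b.natAbs := by
  unfold ek
  split_ifs <;> omega

lemma el_des_iff (a b : ℤ) :
    (el a < el b ∨ (a = b ∧ b < 0)) ↔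
      a.natAbs + (if 0 ≤ a then 1 else 0) ≤ b.natAbs := by
  unfold el
  split_ifs <;> omega

lemma el_asc_iff (a b : ℤ) :
    (el a < el b ∨ (a = b ∧ 0 ≤ b)) ↔
      a.natAbs + (if 0 ≤ b then 0 else 1) ≤ b.natAbs := by
  unfold el
  split_ifs <;> omega

lemma chain_mono {n : ℕ} {m : Fin n → ℕ} {d : ℕ → ℕ × ℕ}
    (h2 : ∀ (i : ℕ) (h : i + 1 < n), m ⟨i, by omega⟩ + (d (i+1)).2 ≤ m ⟨i+1, h⟩) :
    ∀ (j : ℕ) (hj : j < n) (i : ℕ) (hi : i ≤ j), m ⟨i, by omega⟩ ≤ m ⟨j, hj⟩ := by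
  intro j
  induction j with
  | zero =>
      intro hj i hi
      have : i = 0 := by omega
      subst this
      exact le_rfl
  | succ j IH =>
      intro hj i hi
      rcases Nat.lt_or_ge i (j+1) with h | h
      · have := IH (by omega) i (by omega)
        have hstep := h2 j hj
        omega
      · have : i = j + 1 := by omega
        subst this
        exact le_rfl


lemma sigma_mk_eq {I : Type*} {β : Type*} {S : I → Finset β} {i j : I}
    (u : {m // m ∈ S i}) (v : {m // m ∈ S j}) (h : i = j) (h2 : (u : β) = (v : β)) :
    (⟨i, u⟩ : Σ t, {m // m ∈ S t}) = ⟨j, v⟩ := by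
  subst h
  rw [Subtype.ext h2]

def condP (n : ℕ) (π : Equiv.Perm (Fin n)) (k : ℕ) (a : Fin n → ℤ) : Prop :=
  (∀ s, a s ≠ 0 ∧ |a s| ≤ (k : ℤ)) ∧
    ∀ (s : ℕ) (hs : s + 1 < n),
      if π ⟨s + 1, hs⟩ < π ⟨s, Nat.lt_of_succ_lt hs⟩ then
        ek (a ⟨s, Nat.lt_of_succ_lt hs⟩) < ek (a ⟨s + 1, hs⟩) ∨
          (a ⟨s, Nat.lt_of_succ_lt hs⟩ = a ⟨s + 1, hs⟩ ∧ a ⟨s + 1, hs⟩ < 0)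
      else
        ek (a ⟨s, Nat.lt_of_succ_lt hs⟩) < ek (a ⟨s + 1, hs⟩) ∨
          (a ⟨s, Nat.lt_of_succ_lt hs⟩ = a ⟨s + 1, hs⟩ ∧ 0 < a ⟨s + 1, hs⟩)

lemma P_forward (n : ℕ) (π : Equiv.Perm (Fin n)) (k : ℕ) (a : Fin n → ℤ)
    (h : condP n π k a) :
    (fun i : Fin n => (a i).natAbs)
      ∈ chainsF n (dataP n π (fun i => decide (0 < a i))) (k+1) := by
  obtain ⟨h1, h2⟩ := h
  rw [mem_chainsF]
  refine ⟨?_, ?_, ?_⟩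
  · intro i hi
    have := (h1 ⟨i, hi⟩).1
    simp only [dataP]
    omega
  · intro i hi
    have hcond := h2 i hi
    simp only [dataP, iotaD]
    have e : i + 1 - 1 = i := by omega
    rw [e]
    have hdesc : descB n π i
        = decide (π ⟨i+1, hi⟩ < π ⟨i, Nat.lt_of_succ_lt hi⟩) := by
      unfold descB; rw [dif_pos hi]
    have heps1 : epsN n (fun j => decide (0 < a j)) i
        = decide (0 < a ⟨i, Nat.lt_of_succ_lt hi⟩) := by
      unfold epsN; rw [dif_pos (Nat.lt_of_succ_lt hi)]
    have heps2 : epsN n (fun j => decide (0 < a j)) (i+1)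
        = decide (0 < a ⟨i+1, hi⟩) := by
      unfold epsN; rw [dif_pos hi]
    rw [hdesc, heps1, heps2]
    have hne1 := (h1 ⟨i, Nat.lt_of_succ_lt hi⟩).1
    have hne2 := (h1 ⟨i+1, hi⟩).1
    by_cases hd : π ⟨i+1, hi⟩ < π ⟨i, Nat.lt_of_succ_lt hi⟩
    · rw [if_pos hd] at hcond
      have hT := (ek_des_iff _ _ hne1 hne2).mp hcond
      simp only [hd, decide_true]
      by_cases h01 : 0 < a ⟨i, Nat.lt_of_succ_lt hi⟩
      · rw [if_pos h01] at hT
        simp [h01]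
        omega
      · rw [if_neg h01] at hT
        simp [h01]
        omega
    · rw [if_neg hd] at hcond
      have hT := (ek_asc_iff _ _ hne1 hne2).mp hcond
      simp only [hd, decide_false]
      by_cases h01 : 0 < a ⟨i+1, hi⟩
      · rw [if_pos h01] at hT
        simp [h01]
        omega
      · rw [if_neg h01] at hT
        simp [h01]
        omega
  · intro h0
    have := (h1 ⟨n-1, by omega⟩).2
    rw [Int.abs_eq_natAbs] at this
    omega

lemma P_backward (n : ℕ) (π : Equiv.Perm (Fin n)) (k : ℕ) (ε : Fin n → Bool)
    (m : Fin n → ℕ) (hm : m ∈ chainsF n (dataP n π ε) (k+1)) :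
    condP n π k (fun i => if ε i then (m i : ℤ) else -(m i : ℤ)) := by
  rw [mem_chainsF] at hm
  obtain ⟨h1, h2, h3⟩ := hm
  have hpos : ∀ i : Fin n, 1 ≤ m i := by
    intro i
    have h := h1 i.1 i.2
    simp only [dataP] at h
    have he : (⟨i.1, i.2⟩ : Fin n) = i := rfl
    rwa [he] at h
  have hbound : ∀ i : Fin n, m i ≤ k := by
    intro i
    have hn0 : 0 < n := by have := i.2; omega
    have hmono := chain_mono h2 (n-1) (by omega) i.1 (by omega)
    have htop := h3 hn0
    have he : (⟨i.1, by omega⟩ : Fin n) = i := rfl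
    rw [he] at hmono
    omega
  constructor
  · intro s
    have := hpos s
    have := hbound s
    constructor
    · show (if ε s = true then ((m s : ℤ)) else -(m s : ℤ)) ≠ 0
      split_ifs <;> omega
    · show |if ε s = true then ((m s : ℤ)) else -(m s : ℤ)| ≤ (k : ℤ)
      split_ifs <;> rw [abs_le] <;> constructor <;> push_cast <;> omega
  · intro s hs
    have hcond := h2 s hs
    simp only [dataP, iotaD] at hcond
    have e : s + 1 - 1 = s := by omega
    rw [e] at hcond
    have hdesc : descB n π s
        = decide (π ⟨s+1, hs⟩ < π ⟨s, Nat.lt_of_succ_lt hs⟩) := by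
      unfold descB; rw [dif_pos hs]
    have heps1 : epsN n ε s = ε ⟨s, Nat.lt_of_succ_lt hs⟩ := by
      unfold epsN; rw [dif_pos (Nat.lt_of_succ_lt hs)]
    have heps2 : epsN n ε (s+1) = ε ⟨s+1, hs⟩ := by
      unfold epsN; rw [dif_pos hs]
    rw [hdesc, heps1, heps2] at hcond
    have hp1 := hpos ⟨s, Nat.lt_of_succ_lt hs⟩
    have hp2 := hpos ⟨s+1, hs⟩
    set A : ℤ := if ε ⟨s, Nat.lt_of_succ_lt hs⟩ then (m ⟨s, Nat.lt_of_succ_lt hs⟩ : ℤ)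
      else -(m ⟨s, Nat.lt_of_succ_lt hs⟩ : ℤ) with hA
    set B : ℤ := if ε ⟨s+1, hs⟩ then (m ⟨s+1, hs⟩ : ℤ) else -(m ⟨s+1, hs⟩ : ℤ) with hB
    have hneA : A ≠ 0 := by rw [hA]; split_ifs <;> omega
    have hneB : B ≠ 0 := by rw [hB]; split_ifs <;> omega
    have habsA : A.natAbs = m ⟨s, Nat.lt_of_succ_lt hs⟩ := by rw [hA]; split_ifs <;> simp
    have habsB : B.natAbs = m ⟨s+1, hs⟩ := by rw [hB]; split_ifs <;> simp
    have hsgnA : (0 < A) ↔ (ε ⟨s, Nat.lt_of_succ_lt hs⟩ = true) := by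
      rw [hA]; split_ifs with h <;> simp [h] <;> omega
    have hsgnB : (0 < B) ↔ (ε ⟨s+1, hs⟩ = true) := by
      rw [hB]; split_ifs with h <;> simp [h] <;> omega
    by_cases hd : π ⟨s+1, hs⟩ < π ⟨s, Nat.lt_of_succ_lt hs⟩
    · rw [if_pos hd]
      rw [show (fun i : Fin n => if ε i then (m i : ℤ) else -(m i : ℤ))
        ⟨s, Nat.lt_of_succ_lt hs⟩ = A from rfl]
      rw [show (fun i : Fin n => if ε i then (m i : ℤ) else -(m i : ℤ)) ⟨s+1, hs⟩ = B from rfl]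
      rw [ek_des_iff A B hneA hneB, habsA, habsB]
      simp [hd] at hcond
      by_cases hsA : (0 < A)
      · rw [if_pos hsA]
        rw [hsgnA] at hsA
        rw [if_pos hsA] at hcond
        omega
      · rw [if_neg hsA]
        rw [hsgnA] at hsA
        rw [if_neg hsA] at hcond
        omega
    · rw [if_neg hd]
      rw [show (fun i : Fin n => if ε i then (m i : ℤ) else -(m i : ℤ))
        ⟨s, Nat.lt_of_succ_lt hs⟩ = A from rfl]
      rw [show (fun i : Fin n => if ε i then (m i : ℤ) else -(m i : ℤ)) ⟨s+1, hs⟩ = B from rfl]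
      rw [ek_asc_iff A B hneA hneB, habsA, habsB]
      simp [hd] at hcond
      by_cases hsB : (0 < B)
      · rw [if_pos hsB]
        rw [hsgnB] at hsB
        rw [if_pos hsB] at hcond
        omega
      · rw [if_neg hsB]
        rw [hsgnB] at hsB
        rw [if_neg hsB] at hcond
        omega

lemma count_P (n : ℕ) (π : Equiv.Perm (Fin n)) (k : ℕ) :
    enrichedCount π k
      = ∑ ε : Fin n → Bool, (chainsF n (dataP n π ε) (k+1)).card := by
  classical
  have hEC : enrichedCount π k = Nat.card {a : Fin n → ℤ // condP n π k a} := rfl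
  rw [hEC]
  have E : {a : Fin n → ℤ // condP n π k a}
      ≃ (Σ ε : Fin n → Bool, {m : Fin n → ℕ // m ∈ chainsF n (dataP n π ε) (k+1)}) := by
    refine Equiv.mk
      (fun a => ⟨fun i => decide (0 < a.1 i),
        ⟨fun i => (a.1 i).natAbs, P_forward n π k a.1 a.2⟩⟩)
      (fun p => ⟨fun i => if p.1 i then (p.2.1 i : ℤ) else -(p.2.1 i : ℤ),
        P_backward n π k p.1 p.2.1 p.2.2⟩)
      ?_ ?_
    · intro a
      apply Subtype.ext
      funext i
      have hne := (a.2.1 i).1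
      simp only [decide_eq_true_eq]
      split_ifs with h
      · omega
      · omega
    · intro p
      obtain ⟨ε, m, hm⟩ := p
      have hpos : ∀ i : Fin n, 1 ≤ m i := by
        intro i
        have h := ((mem_chainsF n _ _ m).mp hm).1 i.1 i.2
        simp only [dataP] at h
        have he : (⟨i.1, i.2⟩ : Fin n) = i := rfl
        rwa [he] at h
      dsimp only
      refine sigma_mk_eq (S := fun ε => chainsF n (dataP n π ε) (k+1)) _ _ ?_ ?_
      · funext i
        have hp := hpos i
        show decide (0 < (if ε i = true then ((m i : ℤ)) else -(m i : ℤ))) = ε i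
        cases hε : ε i <;> simp [hε] <;> omega
      · show (fun i => ((if ε i = true then ((m i : ℤ)) else -(m i : ℤ)).natAbs)) = m
        funext i
        cases hε : ε i <;> simp [hε]
  rw [Nat.card_congr E, Nat.card_eq_fintype_card, Fintype.card_sigma]
  exact Finset.sum_congr rfl fun ε _ => Fintype.card_coe _


def condQ (n : ℕ) (π : Equiv.Perm (Fin n)) (k : ℕ) (a : Fin n → ℤ) : Prop :=
  (∀ s, |a s| ≤ (k : ℤ)) ∧
    ∀ (s : ℕ) (hs : s + 1 < n),
      if π ⟨s + 1, hs⟩ < π ⟨s, Nat.lt_of_succ_lt hs⟩ then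
        el (a ⟨s, Nat.lt_of_succ_lt hs⟩) < el (a ⟨s + 1, hs⟩) ∨
          (a ⟨s, Nat.lt_of_succ_lt hs⟩ = a ⟨s + 1, hs⟩ ∧ a ⟨s + 1, hs⟩ < 0)
      else
        el (a ⟨s, Nat.lt_of_succ_lt hs⟩) < el (a ⟨s + 1, hs⟩) ∨
          (a ⟨s, Nat.lt_of_succ_lt hs⟩ = a ⟨s + 1, hs⟩ ∧ 0 ≤ a ⟨s + 1, hs⟩)

lemma Q_forward (n : ℕ) (π : Equiv.Perm (Fin n)) (k : ℕ) (a : Fin n → ℤ)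
    (h : condQ n π k a) :
    (fun i : Fin n => (a i).natAbs)
      ∈ chainsF n (dataQ n π (fun i => decide (0 ≤ a i))) (k+1) := by
  obtain ⟨h1, h2⟩ := h
  rw [mem_chainsF]
  refine ⟨?_, ?_, ?_⟩
  · intro i hi
    simp only [dataQ]
    have heps : epsN n (fun j => decide (0 ≤ a j)) i = decide (0 ≤ a ⟨i, hi⟩) := by
      unfold epsN; rw [dif_pos hi]
    rw [heps]
    by_cases h0 : 0 ≤ a ⟨i, hi⟩
    · simp [h0]
    · simp [h0]
      omega
  · intro i hi
    have hcond := h2 i hi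
    simp only [dataQ, iotaD]
    have e : i + 1 - 1 = i := by omega
    rw [e]
    have hdesc : descB n π i
        = decide (π ⟨i+1, hi⟩ < π ⟨i, Nat.lt_of_succ_lt hi⟩) := by
      unfold descB; rw [dif_pos hi]
    have heps1 : epsN n (fun j => decide (0 ≤ a j)) i
        = decide (0 ≤ a ⟨i, Nat.lt_of_succ_lt hi⟩) := by
      unfold epsN; rw [dif_pos (Nat.lt_of_succ_lt hi)]
    have heps2 : epsN n (fun j => decide (0 ≤ a j)) (i+1)
        = decide (0 ≤ a ⟨i+1, hi⟩) := by
      unfold epsN; rw [dif_pos hi]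
    rw [hdesc, heps1, heps2]
    by_cases hd : π ⟨i+1, hi⟩ < π ⟨i, Nat.lt_of_succ_lt hi⟩
    · rw [if_pos hd] at hcond
      have hT := (el_des_iff _ _).mp hcond
      simp only [hd, decide_true]
      by_cases h01 : 0 ≤ a ⟨i, Nat.lt_of_succ_lt hi⟩
      · rw [if_pos h01] at hT
        simp [h01]
        omega
      · rw [if_neg h01] at hT
        simp [h01]
        omega
    · rw [if_neg hd] at hcond
      have hT := (el_asc_iff _ _).mp hcond
      simp only [hd, decide_false]
      by_cases h01 : 0 ≤ a ⟨i+1, hi⟩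
      · rw [if_pos h01] at hT
        simp [h01]
        omega
      · rw [if_neg h01] at hT
        simp [h01]
        omega
  · intro h0
    have := h1 ⟨n-1, by omega⟩
    rw [Int.abs_eq_natAbs] at this
    omega

lemma Q_backward (n : ℕ) (π : Equiv.Perm (Fin n)) (k : ℕ) (ε : Fin n → Bool)
    (m : Fin n → ℕ) (hm : m ∈ chainsF n (dataQ n π ε) (k+1)) :
    condQ n π k (fun i => if ε i then (m i : ℤ) else -(m i : ℤ)) := by
  rw [mem_chainsF] at hm
  obtain ⟨h1, h2, h3⟩ := hm
  have hpos : ∀ i : Fin n, ε i = false → 1 ≤ m i := by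
    intro i hf
    have h := h1 i.1 i.2
    simp only [dataQ] at h
    have heps : epsN n ε i.1 = ε i := by
      unfold epsN; rw [dif_pos i.2]
    rw [heps, hf] at h
    have he : (⟨i.1, i.2⟩ : Fin n) = i := rfl
    rw [he] at h
    simpa using h
  have hbound : ∀ i : Fin n, m i ≤ k := by
    intro i
    have hn0 : 0 < n := by have := i.2; omega
    have hmono := chain_mono h2 (n-1) (by omega) i.1 (by omega)
    have htop := h3 hn0
    have he : (⟨i.1, by omega⟩ : Fin n) = i := rfl
    rw [he] at hmono
    omega
  constructor
  · intro s
    have := hbound s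
    show |if ε s = true then ((m s : ℤ)) else -(m s : ℤ)| ≤ (k : ℤ)
    split_ifs <;> rw [abs_le] <;> constructor <;> push_cast <;> omega
  · intro s hs
    have hcond := h2 s hs
    simp only [dataQ, iotaD] at hcond
    have e : s + 1 - 1 = s := by omega
    rw [e] at hcond
    have hdesc : descB n π s
        = decide (π ⟨s+1, hs⟩ < π ⟨s, Nat.lt_of_succ_lt hs⟩) := by
      unfold descB; rw [dif_pos hs]
    have heps1 : epsN n ε s = ε ⟨s, Nat.lt_of_succ_lt hs⟩ := by
      unfold epsN; rw [dif_pos (Nat.lt_of_succ_lt hs)]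
    have heps2 : epsN n ε (s+1) = ε ⟨s+1, hs⟩ := by
      unfold epsN; rw [dif_pos hs]
    rw [hdesc, heps1, heps2] at hcond
    set A : ℤ := if ε ⟨s, Nat.lt_of_succ_lt hs⟩ then (m ⟨s, Nat.lt_of_succ_lt hs⟩ : ℤ)
      else -(m ⟨s, Nat.lt_of_succ_lt hs⟩ : ℤ) with hA
    set B : ℤ := if ε ⟨s+1, hs⟩ then (m ⟨s+1, hs⟩ : ℤ) else -(m ⟨s+1, hs⟩ : ℤ) with hB
    have hp1 := hpos ⟨s, Nat.lt_of_succ_lt hs⟩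
    have hp2 := hpos ⟨s+1, hs⟩
    have habsA : A.natAbs = m ⟨s, Nat.lt_of_succ_lt hs⟩ := by rw [hA]; split_ifs <;> simp
    have habsB : B.natAbs = m ⟨s+1, hs⟩ := by rw [hB]; split_ifs <;> simp
    have hsgnA : (0 ≤ A) ↔ (ε ⟨s, Nat.lt_of_succ_lt hs⟩ = true) := by
      cases hε : ε ⟨s, Nat.lt_of_succ_lt hs⟩ with
      | true => rw [hA, if_pos hε]; simp [hε]
      | false =>
          have := hp1 hε
          rw [hA, if_neg (by simp [hε])]
          simp [hε]
          omega
    have hsgnB : (0 ≤ B) ↔ (ε ⟨s+1, hs⟩ = true) := by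
      cases hε : ε ⟨s+1, hs⟩ with
      | true => rw [hB, if_pos hε]; simp [hε]
      | false =>
          have := hp2 hε
          rw [hB, if_neg (by simp [hε])]
          simp [hε]
          omega
    by_cases hd : π ⟨s+1, hs⟩ < π ⟨s, Nat.lt_of_succ_lt hs⟩
    · rw [if_pos hd]
      rw [show (fun i : Fin n => if ε i then (m i : ℤ) else -(m i : ℤ))
        ⟨s, Nat.lt_of_succ_lt hs⟩ = A from rfl]
      rw [show (fun i : Fin n => if ε i then (m i : ℤ) else -(m i : ℤ)) ⟨s+1, hs⟩ = B from rfl]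
      rw [el_des_iff A B, habsA, habsB]
      simp [hd] at hcond
      by_cases hsA : (0 ≤ A)
      · rw [if_pos hsA]
        rw [hsgnA] at hsA
        rw [if_pos hsA] at hcond
        omega
      · rw [if_neg hsA]
        rw [hsgnA] at hsA
        rw [if_neg hsA] at hcond
        omega
    · rw [if_neg hd]
      rw [show (fun i : Fin n => if ε i then (m i : ℤ) else -(m i : ℤ))
        ⟨s, Nat.lt_of_succ_lt hs⟩ = A from rfl]
      rw [show (fun i : Fin n => if ε i then (m i : ℤ) else -(m i : ℤ)) ⟨s+1, hs⟩ = B from rfl]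
      rw [el_asc_iff A B, habsA, habsB]
      simp [hd] at hcond
      by_cases hsB : (0 ≤ B)
      · rw [if_pos hsB]
        rw [hsgnB] at hsB
        rw [if_pos hsB] at hcond
        omega
      · rw [if_neg hsB]
        rw [hsgnB] at hsB
        rw [if_neg hsB] at hcond
        omega

lemma count_Q (n : ℕ) (π : Equiv.Perm (Fin n)) (k : ℕ) :
    leftEnrichedCount π k
      = ∑ ε : Fin n → Bool, (chainsF n (dataQ n π ε) (k+1)).card := by
  classical
  have hEC : leftEnrichedCount π k = Nat.card {a : Fin n → ℤ // condQ n π k a} := rfl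
  rw [hEC]
  have E : {a : Fin n → ℤ // condQ n π k a}
      ≃ (Σ ε : Fin n → Bool, {m : Fin n → ℕ // m ∈ chainsF n (dataQ n π ε) (k+1)}) := by
    refine Equiv.mk
      (fun a => ⟨fun i => decide (0 ≤ a.1 i),
        ⟨fun i => (a.1 i).natAbs, Q_forward n π k a.1 a.2⟩⟩)
      (fun p => ⟨fun i => if p.1 i then (p.2.1 i : ℤ) else -(p.2.1 i : ℤ),
        Q_backward n π k p.1 p.2.1 p.2.2⟩)
      ?_ ?_
    · intro a
      apply Subtype.ext
      funext i
      simp only [decide_eq_true_eq]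
      split_ifs with h
      · omega
      · omega
    · intro p
      obtain ⟨ε, m, hm⟩ := p
      have hpos : ∀ i : Fin n, ε i = false → 1 ≤ m i := by
        intro i hf
        have h := ((mem_chainsF n _ _ m).mp hm).1 i.1 i.2
        simp only [dataQ] at h
        have heps : epsN n ε i.1 = ε i := by
          unfold epsN; rw [dif_pos i.2]
        rw [heps, hf] at h
        have he : (⟨i.1, i.2⟩ : Fin n) = i := rfl
        rw [he] at h
        simpa using h
      dsimp only
      refine sigma_mk_eq (S := fun ε => chainsF n (dataQ n π ε) (k+1)) _ _ ?_ ?_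
      · funext i
        show decide (0 ≤ (if ε i = true then ((m i : ℤ)) else -(m i : ℤ))) = ε i
        cases hε : ε i with
        | true => simp [hε]
        | false =>
            have hp := hpos i hε
            simp [hε]
            omega
      · show (fun i => ((if ε i = true then ((m i : ℤ)) else -(m i : ℤ)).natAbs)) = m
        funext i
        cases hε : ε i <;> simp [hε]
  rw [Nat.card_congr E, Nat.card_eq_fintype_card, Fintype.card_sigma]
  exact Finset.sum_congr rfl fun ε _ => Fintype.card_coe _


lemma sum_not_reindex {n : ℕ} (g : (Fin n → Bool) → ℚ) :
    ∑ ε : Fin n → Bool, g (fun j => !(ε j)) = ∑ ε : Fin n → Bool, g ε := by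
  apply Fintype.sum_bijective (fun ε : Fin n → Bool => (fun j => !(ε j) : Fin n → Bool))
  · apply Function.Involutive.bijective
    intro ε
    funext j
    simp
  · intro ε
    rfl

lemma P_recip (n : ℕ) (π : Equiv.Perm (Fin n)) (P : Polynomial ℚ)
    (hP : ∀ k : ℕ, 0 < k → P.eval (k : ℚ) = (enrichedCount π k : ℚ)) :
    ∀ x : ℚ, P.eval (-x) = (-1) ^ n * P.eval x := by
  classical
  set PP : Polynomial ℚ := ∑ ε : Fin n → Bool, HP n (dataP n π ε) with hPPdef
  have hPPeval : ∀ (ε : Fin n → Bool) (k : ℕ),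
      (HP n (dataP n π ε)).eval ((k+1 : ℕ) : ℚ)
        = ((chainsF n (dataP n π ε) (k+1)).card : ℚ) := by
    intro ε k
    apply HP_eval
    · intro s
      exact iotaD_le n π ε s
    · intro s
      simp only [dataP]
      have := iotaD_le n π ε (s+1)
      omega
    · intro _
      simp only [dataP]
      omega
  have hPP : ∀ k : ℕ, PP.eval ((k+1 : ℕ) : ℚ) = (enrichedCount π k : ℚ) := by
    intro k
    rw [hPPdef, Polynomial.eval_finset_sum, count_P n π k]
    push_cast
    refine Finset.sum_congr rfl fun ε _ => ?_
    have := hPPeval ε k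
    push_cast at this
    exact this
  have hPcomp : P = PP.comp (Polynomial.X + Polynomial.C 1) := by
    apply poly_eq_of_eval_shift _ _ 1
    intro k
    rw [Polynomial.eval_comp]
    simp only [Polynomial.eval_add, Polynomial.eval_X, Polynomial.eval_C]
    have h1 : (1:ℚ) + (k:ℚ) = ((k+1 : ℕ) : ℚ) := by push_cast; ring
    rw [h1, hP (k+1) (by omega)]
    have h2 : ((k+1:ℕ):ℚ) + 1 = ((k+1+1 : ℕ) : ℚ) := by push_cast; ring
    rw [h2, hPP (k+1)]
  intro x
  have hPx : ∀ y : ℚ, P.eval y = PP.eval (y + 1) := by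
    intro y
    rw [hPcomp, Polynomial.eval_comp]
    simp
  rw [hPx (-x), hPx x]
  have hstep : ∀ ε : Fin n → Bool,
      (HP n (dataP n π ε)).eval (-x + 1)
        = (-1)^n * (HP n (dataP n π (fun j => !(ε j)))).eval (x + 1) := by
    intro ε
    have e1 : (-x + 1 : ℚ) = -(x - 1) := by ring
    rw [e1]
    rw [HP_reflect n (dataP n π ε) (fun s => by simp [dataP]) (fun s => iotaD_le n π ε s)]
    congr 1
    have hc1 : HP n (dT (dataP n π ε))
        = HP n (fun s => ((0:ℕ), iotaD n π (fun j => !(ε j)) s)) :=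
      HP_congr n _ _ (fun s hs => dT_dataP n π ε s hs)
    rw [hc1]
    have e2 : (x - 1 + 1 : ℚ) = x := by ring
    rw [e2]
    rw [HP_shift n _ (fun s => iotaD_le n π _ s) x]
    rfl
  rw [hPPdef, Polynomial.eval_finset_sum, Polynomial.eval_finset_sum]
  rw [Finset.sum_congr rfl (fun ε _ => hstep ε), ← Finset.mul_sum]
  congr 1
  exact sum_not_reindex (fun ε => (HP n (dataP n π ε)).eval (x + 1))

lemma Q_recip (n : ℕ) (π : Equiv.Perm (Fin n)) (Q : Polynomial ℚ)
    (hQ : ∀ k : ℕ, 0 < k → Q.eval (k : ℚ) = (leftEnrichedCount π k : ℚ)) :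
    ∀ x : ℚ, Q.eval (-x - 1/2) = (-1) ^ n * Q.eval (x - 1/2) := by
  classical
  set QQ : Polynomial ℚ := ∑ ε : Fin n → Bool, HP n (dataQ n π ε) with hQQdef
  have hQQeval : ∀ (ε : Fin n → Bool) (k : ℕ),
      (HP n (dataQ n π ε)).eval ((k+1 : ℕ) : ℚ)
        = ((chainsF n (dataQ n π ε) (k+1)).card : ℚ) := by
    intro ε k
    apply HP_eval
    · intro s
      exact iotaD_le n π ε s
    · intro s
      exact dataQ_valid n π ε s
    · intro _
      simp only [dataQ]
      split_ifs <;> omega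
  have hQQ : ∀ k : ℕ, QQ.eval ((k+1 : ℕ) : ℚ) = (leftEnrichedCount π k : ℚ) := by
    intro k
    rw [hQQdef, Polynomial.eval_finset_sum, count_Q n π k]
    push_cast
    refine Finset.sum_congr rfl fun ε _ => ?_
    have := hQQeval ε k
    push_cast at this
    exact this
  have hQcomp : Q = QQ.comp (Polynomial.X + Polynomial.C 1) := by
    apply poly_eq_of_eval_shift _ _ 1
    intro k
    rw [Polynomial.eval_comp]
    simp only [Polynomial.eval_add, Polynomial.eval_X, Polynomial.eval_C]
    have h1 : (1:ℚ) + (k:ℚ) = ((k+1 : ℕ) : ℚ) := by push_cast; ring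
    rw [h1, hQ (k+1) (by omega)]
    have h2 : ((k+1:ℕ):ℚ) + 1 = ((k+1+1 : ℕ) : ℚ) := by push_cast; ring
    rw [h2, hQQ (k+1)]
  intro x
  have hQx : ∀ y : ℚ, Q.eval y = QQ.eval (y + 1) := by
    intro y
    rw [hQcomp, Polynomial.eval_comp]
    simp
  rw [hQx (-x - 1/2), hQx (x - 1/2)]
  have hstep : ∀ ε : Fin n → Bool,
      (HP n (dataQ n π ε)).eval (-x - 1/2 + 1)
        = (-1)^n * (HP n (dataQ n π (fun j => !(ε j)))).eval (x - 1/2 + 1) := by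
    intro ε
    have e1 : (-x - 1/2 + 1 : ℚ) = -(x - 1/2) := by ring
    rw [e1]
    rw [HP_reflect n (dataQ n π ε)
      (fun s => by simp only [dataQ]; split_ifs <;> omega)
      (fun s => iotaD_le n π ε s)]
    congr 1
    have hc1 : HP n (dT (dataQ n π ε)) = HP n (dataQ n π (fun j => !(ε j))) :=
      HP_congr n _ _ (fun s hs => dT_dataQ n π ε s hs)
    rw [hc1]
  rw [hQQdef, Polynomial.eval_finset_sum, Polynomial.eval_finset_sum]
  rw [Finset.sum_congr rfl (fun ε _ => hstep ε), ← Finset.mul_sum]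
  congr 1
  exact sum_not_reindex (fun ε => (HP n (dataQ n π ε)).eval (x - 1/2 + 1))

end Stmt11Aux

theorem stmt11 (n : ℕ) (π : Equiv.Perm (Fin n)) (P Q : Polynomial ℚ)
    (hP : ∀ k : ℕ, 0 < k → P.eval (k : ℚ) = (enrichedCount π k : ℚ))
    (hQ : ∀ k : ℕ, 0 < k → Q.eval (k : ℚ) = (leftEnrichedCount π k : ℚ)) :
    (∀ x : ℚ, P.eval (-x) = (-1) ^ n * P.eval x) ∧
    (∀ x : ℚ, Q.eval (-x - 1 / 2) = (-1) ^ n * Q.eval (x - 1 / 2)) := by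
  exact ⟨Stmt11Aux.P_recip n π P hP, Stmt11Aux.Q_recip n π Q hQ⟩
end
end

section
/- The interior peak polynomial W_n(t) = Σ_{π ∈ S_n} t^{pe(π)+1} satisfies W_n(4t/(1+t)^2) = (2^{n+1}/(1+t)^{n+1})·A_n(t), where A_n(t) = Σ_{π ∈ S_n} t^{des(π)+1} is the Eulerian polynomial. -/
open scoped Classical

noncomputable section

/-- number of descents (adjacent strict drops) in a list -/
def desL : List ℕ → ℕ
  | a :: b :: l => (if b < a then 1 else 0) + desL (b :: l)
  | _ => 0

/-- number of interior peaks in a list -/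
def peL : List ℕ → ℕ
  | a :: b :: c :: l => (if a < b ∧ c < b then 1 else 0) + peL (b :: c :: l)
  | _ => 0

lemma desL_cons_max (m : ℕ) (b : List ℕ) (hb : ∀ x ∈ b, x < m) :
    desL (m :: b) = desL b + (if b = [] then 0 else 1) := by
  cases b with
  | nil => simp [desL]
  | cons x t =>
    have : x < m := hb x (by simp)
    simp [desL, this]
    omega

lemma desL_append (a : List ℕ) (m : ℕ) (b : List ℕ)
    (ha : ∀ x ∈ a, x < m) (hb : ∀ x ∈ b, x < m) :
    desL (a ++ m :: b) = desL a + desL b + (if b = [] then 0 else 1) := by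
  induction a with
  | nil => rw [List.nil_append, desL_cons_max m b hb]; simp [desL]
  | cons p a' ih =>
    have hp : p < m := ha p (by simp)
    have ha' : ∀ x ∈ a', x < m := fun x hx => ha x (by simp [hx])
    cases a' with
    | nil =>
      rw [show ([p] ++ m :: b) = p :: m :: b by simp]
      rw [show desL (p :: m :: b) = (if m < p then 1 else 0) + desL (m :: b) from rfl]
      rw [desL_cons_max m b hb]
      simp [desL, Nat.not_lt.mpr hp.le]
    | cons q a'' =>
      have hq : q < m := ha' q (by simp)
      rw [List.cons_append, List.cons_append]
      rw [show desL (p :: q :: (a'' ++ m :: b)) =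
        (if q < p then 1 else 0) + desL (q :: (a'' ++ m :: b)) from rfl]
      rw [show (q :: (a'' ++ m :: b)) = (q :: a'') ++ m :: b by simp]
      rw [ih ha']
      rw [show desL (p :: q :: a'') = (if q < p then 1 else 0) + desL (q :: a'') from rfl]
      omega

lemma peL_cons_max (m : ℕ) (b : List ℕ) (hb : ∀ x ∈ b, x < m) :
    peL (m :: b) = peL b := by
  cases b with
  | nil => simp [peL]
  | cons x t =>
    cases t with
    | nil => simp [peL]
    | cons y t' =>
      have : x < m := hb x (by simp)
      simp [peL, Nat.not_lt.mpr this.le]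

lemma peL_append (a : List ℕ) (m : ℕ) (b : List ℕ)
    (ha : ∀ x ∈ a, x < m) (hb : ∀ x ∈ b, x < m) :
    peL (a ++ m :: b) = peL a + peL b + (if a ≠ [] ∧ b ≠ [] then 1 else 0) := by
  induction a with
  | nil => rw [List.nil_append, peL_cons_max m b hb]; simp [peL]
  | cons p a' ih =>
    have hp : p < m := ha p (by simp)
    have ha' : ∀ x ∈ a', x < m := fun x hx => ha x (by simp [hx])
    cases a' with
    | nil =>
      cases b with
      | nil => simp [peL, peL_cons_max]
      | cons x t =>
        have hx : x < m := hb x (by simp)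
        have : peL (p :: m :: x :: t) = (if p < m ∧ x < m then 1 else 0) + peL (m :: x :: t) := rfl
        simp only [List.nil_append, List.cons_append] at *
        rw [this, peL_cons_max m (x :: t) hb]
        simp [peL, hp, hx]
        omega
    | cons q a'' =>
      have hIH := ih ha'
      cases a'' with
      | nil =>
        have hq : q < m := ha' q (by simp)
        simp only [List.cons_append, List.nil_append] at *
        rw [show peL (p :: q :: m :: b) = (if p < q ∧ m < q then 1 else 0) + peL (q :: m :: b) from rfl]
        rw [show peL (q :: m :: b) = peL ([q] ++ m :: b) by simp] at *
        rw [hIH]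
        simp [peL, Nat.not_lt.mpr hq.le]
      | cons r a''' =>
        simp only [List.cons_append] at *
        rw [show peL (p :: q :: r :: (a''' ++ m :: b)) =
          (if p < q ∧ r < q then 1 else 0) + peL (q :: r :: (a''' ++ m :: b)) from rfl]
        rw [hIH]
        rw [show peL (p :: q :: r :: a''') =
          (if p < q ∧ r < q then 1 else 0) + peL (q :: r :: a''') from rfl]
        simp only [ne_eq, List.cons_ne_nil, not_false_eq_true, true_and]
        omega

/-- all words (nodup lists) whose set of letters is `S` -/
def words (S : Finset ℕ) : Finset (List ℕ) :=
  (S.sort (· ≤ ·)).permutations.toFinset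

lemma mem_words {S : Finset ℕ} {l : List ℕ} :
    l ∈ words S ↔ l.Nodup ∧ l.toFinset = S := by
  rw [words, List.mem_toFinset, List.mem_permutations]
  constructor
  · intro h
    refine ⟨h.nodup_iff.mpr (S.sort_nodup _), ?_⟩
    rw [List.toFinset_eq_of_perm _ _ h, Finset.sort_toFinset]
  · rintro ⟨h1, h2⟩
    apply List.perm_of_nodup_nodup_toFinset_eq h1 (S.sort_nodup _)
    rw [h2, Finset.sort_toFinset]

lemma length_of_mem_words {S : Finset ℕ} {l : List ℕ} (h : l ∈ words S) :
    l.length = S.card := by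
  rw [words, List.mem_toFinset, List.mem_permutations] at h
  rw [h.length_eq, Finset.length_sort]

lemma words_empty : words ∅ = {[]} := by
  ext l
  simp only [mem_words, Finset.mem_singleton, List.toFinset_eq_empty_iff]
  constructor
  · rintro ⟨_, rfl⟩; rfl
  · rintro rfl; simp

lemma card_words (S : Finset ℕ) : (words S).card = S.card.factorial := by
  rw [words, List.toFinset_card_of_nodup (List.nodup_permutations _ (S.sort_nodup _)),
    List.length_permutations, Finset.length_sort]

lemma takeWhile_ne_append (m : ℕ) (a b : List ℕ) (ha : m ∉ a) :
    (a ++ m :: b).takeWhile (· != m) = a ∧ (a ++ m :: b).dropWhile (· != m) = m :: b := by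
  induction a with
  | nil => simp [List.takeWhile, List.dropWhile]
  | cons x t ih =>
    have hx : x ≠ m := fun h => ha (by simp [h])
    have ht : m ∉ t := fun h => ha (by simp [h])
    obtain ⟨h1, h2⟩ := ih ht
    have hxb : (x != m) = true := by simpa using hx
    constructor
    · simp [List.takeWhile, hxb, h1]
    · simp [List.dropWhile, hxb, h2]

lemma split_at_mem (m : ℕ) (w : List ℕ) (hm : m ∈ w) :
    w.takeWhile (· != m) ++ m :: (w.dropWhile (· != m)).tail = w := by
  induction w with
  | nil => simp at hm
  | cons x t ih =>
    by_cases hx : x = m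
    · subst hx; simp [List.takeWhile, List.dropWhile]
    · have : m ∈ t := by
        rcases List.mem_cons.mp hm with h|h
        · exact absurd h.symm hx
        · exact h
      have h' := ih this
      simp only [List.takeWhile, List.dropWhile]
      have : (x != m) = true := by simpa using hx
      rw [this]
      simpa using h'

lemma sum_words_split {M : Type*} [AddCommMonoid M] (S : Finset ℕ) (hS : S.Nonempty)
    (f : List ℕ → M) :
    ∑ w ∈ words S, f w =
      ∑ A ∈ (S.erase (S.max' hS)).powerset,
        ∑ p ∈ (words A) ×ˢ (words ((S.erase (S.max' hS)) \ A)),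
          f (p.1 ++ S.max' hS :: p.2) := by
  classical
  set m := S.max' hS with hm
  rw [← Finset.sum_sigma (((S.erase m)).powerset)
      (fun A => (words A) ×ˢ (words ((S.erase m) \ A)))
      (fun x => f (x.2.1 ++ m :: x.2.2))]
  refine Finset.sum_bij'
    (i := fun w _ => ⟨(w.takeWhile (· != m)).toFinset,
      (w.takeWhile (· != m), (w.dropWhile (· != m)).tail)⟩)
    (j := fun x _ => x.2.1 ++ m :: x.2.2) ?_ ?_ ?_ ?_ ?_
  · -- i maps into the sigma set
    intro w hw
    rw [mem_words] at hw
    obtain ⟨hnd, hts⟩ := hw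
    have hmw : m ∈ w := by
      rw [← List.mem_toFinset, hts]; exact S.max'_mem hS
    have hsplit := split_at_mem m w hmw
    set a := w.takeWhile (· != m) with hadef
    set b := (w.dropWhile (· != m)).tail with hbdef
    have hnd' : (a ++ m :: b).Nodup := by rw [hsplit]; exact hnd
    rw [List.nodup_append] at hnd'
    obtain ⟨hna, hnmb, hdis⟩ := hnd'
    rw [List.nodup_cons] at hnmb
    obtain ⟨hmb, hnb⟩ := hnmb
    have hma : m ∉ a := fun h => hdis m h m (by simp) rfl
    have htsw : a.toFinset ∪ insert m b.toFinset = S := by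
      rw [← hts, ← hsplit]; simp [List.toFinset_append]
    have hsub : a.toFinset ⊆ S.erase m := by
      intro x hx
      rw [List.mem_toFinset] at hx
      refine Finset.mem_erase.mpr ⟨fun h => hma (h ▸ hx), ?_⟩
      rw [← htsw]; simp [hx]
    have hbts : b.toFinset = (S.erase m) \ a.toFinset := by
      ext x
      simp only [List.mem_toFinset, Finset.mem_sdiff, Finset.mem_erase]
      constructor
      · intro hx
        refine ⟨⟨fun h => hmb (h ▸ hx), ?_⟩, fun h => hdis x h x (List.mem_cons.mpr (Or.inr hx)) rfl⟩
        rw [← htsw]; simp [hx]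
      · rintro ⟨⟨hxm, hxS⟩, hxa⟩
        rw [← htsw] at hxS
        simp only [Finset.mem_union, List.mem_toFinset, Finset.mem_insert] at hxS
        rcases hxS with h | h | h
        · exact absurd h hxa
        · exact absurd h hxm
        · exact h
    refine Finset.mem_sigma.mpr ⟨Finset.mem_powerset.mpr hsub, ?_⟩
    rw [Finset.mem_product]
    exact ⟨mem_words.mpr ⟨hna, rfl⟩, mem_words.mpr ⟨hnb, hbts⟩⟩
  · -- j maps into words S
    rintro ⟨A, a, b⟩ hx
    simp only [Finset.mem_sigma, Finset.mem_powerset, Finset.mem_product, mem_words] at hx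
    obtain ⟨hA, ⟨hna, hta⟩, hnb, htb⟩ := hx
    have hma : m ∉ a := by
      intro h
      have := hA (hta ▸ List.mem_toFinset.mpr h)
      exact (Finset.mem_erase.mp this).1 rfl
    have hmb : m ∉ b := by
      intro h
      have : m ∈ (S.erase m) \ A := htb ▸ List.mem_toFinset.mpr h
      exact (Finset.mem_erase.mp (Finset.mem_sdiff.mp this).1).1 rfl
    have hdis : a.Disjoint (m :: b) := by
      intro x hxa hxb
      rcases List.mem_cons.mp hxb with h | h
      · exact hma (h ▸ hxa)
      · have h1 : x ∈ A := hta ▸ List.mem_toFinset.mpr hxa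
        have h2 : x ∈ (S.erase m) \ A := htb ▸ List.mem_toFinset.mpr h
        exact (Finset.mem_sdiff.mp h2).2 h1
    rw [mem_words]
    constructor
    · rw [List.nodup_append]
      exact ⟨hna, List.nodup_cons.mpr ⟨hmb, hnb⟩, fun x hx y hy hxy => hdis hx (hxy ▸ hy)⟩
    · rw [List.toFinset_append, List.toFinset_cons, hta, htb]
      have hmS : m ∈ S := S.max'_mem hS
      rw [Finset.union_insert, Finset.union_sdiff_of_subset hA]
      exact Finset.insert_erase hmS
  · -- left inverse
    intro w hw
    rw [mem_words] at hw
    have hmw : m ∈ w := by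
      rw [← List.mem_toFinset, hw.2]; exact S.max'_mem hS
    exact split_at_mem m w hmw
  · -- right inverse
    rintro ⟨A, a, b⟩ hx
    simp only [Finset.mem_sigma, Finset.mem_powerset, Finset.mem_product, mem_words] at hx
    obtain ⟨hA, ⟨hna, hta⟩, hnb, htb⟩ := hx
    have hma : m ∉ a := by
      intro h
      have := hA (hta ▸ List.mem_toFinset.mpr h)
      exact (Finset.mem_erase.mp this).1 rfl
    obtain ⟨h1, h2⟩ := takeWhile_ne_append m a b hma
    simp only [h1, h2, List.tail_cons]
    exact Sigma.ext (by simpa using hta) (by simp)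
  · -- values agree
    intro w hw
    rw [mem_words] at hw
    have hmw : m ∈ w := by
      rw [← List.mem_toFinset, hw.2]; exact S.max'_mem hS
    simp only []
    rw [split_at_mem m w hmw]

open PowerSeries

def uu : PowerSeries ℚ := (1 + X)⁻¹

lemma uu_mul : (1 + X : PowerSeries ℚ) * uu = 1 := by
  apply PowerSeries.mul_inv_cancel
  simp

def qq : PowerSeries ℚ := 4 * X * uu ^ 2

def DD (A : Finset ℕ) : PowerSeries ℚ := ∑ w ∈ words A, X ^ desL w
def QQ (A : Finset ℕ) : PowerSeries ℚ := ∑ w ∈ words A, qq ^ peL w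

lemma DD_empty : DD ∅ = 1 := by simp [DD, words_empty, desL]
lemma QQ_empty : QQ ∅ = 1 := by simp [QQ, words_empty, peL]

lemma words_lt_max {S : Finset ℕ} (hS : S.Nonempty) {A : Finset ℕ} {a : List ℕ}
    (hA : A ⊆ S.erase (S.max' hS)) (ha : a ∈ words A) : ∀ x ∈ a, x < S.max' hS := by
  intro x hx
  have hxA : x ∈ A := (mem_words.mp ha).2 ▸ List.mem_toFinset.mpr hx
  have := hA hxA
  rw [Finset.mem_erase] at this
  exact lt_of_le_of_ne (S.le_max' x this.2) this.1

lemma words_eq_nil_iff {A : Finset ℕ} {a : List ℕ} (ha : a ∈ words A) :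
    a = [] ↔ A = ∅ := by
  rw [mem_words] at ha
  constructor
  · rintro rfl; simpa using ha.2.symm
  · rintro rfl; simpa using ha.2

lemma step_QQ (S : Finset ℕ) (hS : S.Nonempty) :
    QQ S = ∑ A ∈ (S.erase (S.max' hS)).powerset,
      QQ A * QQ ((S.erase (S.max' hS)) \ A) *
        (if A = ∅ ∨ A = S.erase (S.max' hS) then 1 else qq) := by
  set m := S.max' hS with hm
  set S' := S.erase m with hS'
  rw [QQ, sum_words_split S hS (fun w => qq ^ peL w)]
  refine Finset.sum_congr rfl fun A hA => ?_
  rw [Finset.mem_powerset] at hA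
  have hB : S' \ A ⊆ S' := Finset.sdiff_subset
  rw [Finset.sum_product]
  have hstep : ∀ a ∈ words A, ∀ b ∈ words (S' \ A),
      qq ^ peL (a ++ m :: b)
        = qq ^ peL a * qq ^ peL b * (if A = ∅ ∨ A = S' then 1 else qq) := by
    intro a ha b hb
    rw [peL_append a m b (words_lt_max hS hA ha) (words_lt_max hS hB hb)]
    rw [pow_add, pow_add]
    congr 1
    have he1 : a = [] ↔ A = ∅ := words_eq_nil_iff ha
    have he2 : b = [] ↔ S' \ A = ∅ := words_eq_nil_iff hb
    have he2' : S' \ A = ∅ ↔ A = S' := by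
      rw [Finset.sdiff_eq_empty_iff_subset]
      exact ⟨fun h => Finset.Subset.antisymm hA h, fun h => h ▸ le_refl _⟩
    by_cases h1 : A = ∅ <;> by_cases h2 : A = S' <;>
      simp [h1, h2, he1, he2, he2', pow_zero, pow_one]
  calc ∑ a ∈ words A, ∑ b ∈ words (S' \ A), qq ^ peL (a ++ m :: b)
      = ∑ a ∈ words A, ∑ b ∈ words (S' \ A),
          qq ^ peL a * qq ^ peL b * (if A = ∅ ∨ A = S' then 1 else qq) := by
        refine Finset.sum_congr rfl fun a ha => Finset.sum_congr rfl fun b hb => ?_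
        exact hstep a ha b hb
    _ = QQ A * QQ (S' \ A) * (if A = ∅ ∨ A = S' then 1 else qq) := by
        rw [QQ, QQ, Finset.sum_mul_sum, Finset.sum_mul]
        refine Finset.sum_congr rfl fun a ha => ?_
        rw [Finset.sum_mul]

lemma step_DD (S : Finset ℕ) (hS : S.Nonempty) :
    DD S = ∑ A ∈ (S.erase (S.max' hS)).powerset,
      DD A * DD ((S.erase (S.max' hS)) \ A) *
        (if A = S.erase (S.max' hS) then 1 else X) := by
  set m := S.max' hS with hm
  set S' := S.erase m with hS'
  rw [DD, sum_words_split S hS (fun w => X ^ desL w)]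
  refine Finset.sum_congr rfl fun A hA => ?_
  rw [Finset.mem_powerset] at hA
  have hB : S' \ A ⊆ S' := Finset.sdiff_subset
  rw [Finset.sum_product]
  have hstep : ∀ a ∈ words A, ∀ b ∈ words (S' \ A),
      (X : PowerSeries ℚ) ^ desL (a ++ m :: b)
        = X ^ desL a * X ^ desL b * (if A = S' then 1 else X) := by
    intro a ha b hb
    rw [desL_append a m b (words_lt_max hS hA ha) (words_lt_max hS hB hb)]
    rw [pow_add, pow_add]
    congr 1
    have he2 : b = [] ↔ S' \ A = ∅ := words_eq_nil_iff hb
    have he2' : S' \ A = ∅ ↔ A = S' := by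
      rw [Finset.sdiff_eq_empty_iff_subset]
      exact ⟨fun h => Finset.Subset.antisymm hA h, fun h => h ▸ le_refl _⟩
    by_cases h2 : A = S' <;> simp [h2, he2, he2']
  calc ∑ a ∈ words A, ∑ b ∈ words (S' \ A), (X : PowerSeries ℚ) ^ desL (a ++ m :: b)
      = ∑ a ∈ words A, ∑ b ∈ words (S' \ A),
          X ^ desL a * X ^ desL b * (if A = S' then 1 else X) := by
        refine Finset.sum_congr rfl fun a ha => Finset.sum_congr rfl fun b hb => ?_
        exact hstep a ha b hb
    _ = DD A * DD (S' \ A) * (if A = S' then 1 else X) := by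
        rw [DD, DD, Finset.sum_mul_sum, Finset.sum_mul]
        refine Finset.sum_congr rfl fun a ha => ?_
        rw [Finset.sum_mul]


lemma key_id : ∀ N (S : Finset ℕ), S.card = N → S.Nonempty →
    QQ S = (2 * uu) ^ (N - 1) * DD S := by
  intro N
  induction N using Nat.strong_induction_on with
  | _ N ih =>
  intro S hcard hS
  have hmmem := S.max'_mem hS
  have hcS' : (S.erase (S.max' hS)).card = N - 1 := by
    rw [Finset.card_erase_of_mem hmmem, hcard]
  have hN : 1 ≤ N := hcard ▸ Finset.card_pos.mpr hS
  rw [step_QQ S hS, step_DD S hS]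
  set m := S.max' hS with hm
  set S' := S.erase m with hS'def
  by_cases hS'e : S' = ∅
  · have hN1 : N = 1 := by
      rw [hS'e] at hcS'
      simp only [Finset.card_empty] at hcS'
      omega
    rw [hS'e, hN1]
    simp [Finset.powerset_empty, QQ_empty, DD_empty]
  · have hS'ne : S'.Nonempty := Finset.nonempty_iff_ne_empty.mpr hS'e
    have hcS'pos : 1 ≤ S'.card := Finset.card_pos.mpr hS'ne
    obtain ⟨k, rfl⟩ : ∃ k, N = k + 2 := ⟨N - 2, by omega⟩
    have hcS'' : S'.card = k + 1 := by omega
    have hQS' : QQ S' = (2 * uu) ^ k * DD S' := by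
      have := ih (k + 1) (by omega) S' hcS'' hS'ne
      simpa using this
    have hemptyP : (∅ : Finset ℕ) ∈ S'.powerset := Finset.mem_powerset.mpr (Finset.empty_subset _)
    have hS'P : S' ∈ S'.powerset \ {∅} := by
      rw [Finset.mem_sdiff, Finset.mem_singleton]
      exact ⟨Finset.mem_powerset.mpr le_rfl, hS'e⟩
    rw [Finset.sum_eq_sum_sdiff_singleton_add hemptyP, Finset.sum_eq_sum_sdiff_singleton_add hS'P,
        Finset.sum_eq_sum_sdiff_singleton_add hemptyP
          (fun A => DD A * DD (S' \ A) * (if A = S' then 1 else X)),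
        Finset.sum_eq_sum_sdiff_singleton_add hS'P
          (fun A => DD A * DD (S' \ A) * (if A = S' then 1 else X))]
    set T := (S'.powerset \ {∅}) \ {S'} with hT
    have hQmid : ∑ A ∈ T, QQ A * QQ (S' \ A) * (if A = ∅ ∨ A = S' then 1 else qq)
        = (2 * uu) ^ (k + 1) * X * ∑ A ∈ T, DD A * DD (S' \ A) := by
      rw [Finset.mul_sum]
      refine Finset.sum_congr rfl fun A hA => ?_
      rw [hT, Finset.mem_sdiff, Finset.mem_sdiff, Finset.mem_powerset,
        Finset.mem_singleton, Finset.mem_singleton] at hA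
      obtain ⟨⟨hAsub, hAne⟩, hAS'⟩ := hA
      have hAnonempty : A.Nonempty := Finset.nonempty_iff_ne_empty.mpr hAne
      have hBnonempty : (S' \ A).Nonempty := by
        rw [Finset.sdiff_nonempty]
        intro h
        exact hAS' (Finset.Subset.antisymm hAsub h)
      have hcardsum : A.card + (S' \ A).card = k + 1 := by
        rw [← hcS'']
        have := Finset.card_sdiff_add_card_eq_card hAsub
        omega
      have hcA : 1 ≤ A.card := Finset.card_pos.mpr hAnonempty
      have hcB : 1 ≤ (S' \ A).card := Finset.card_pos.mpr hBnonempty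
      have hQA : QQ A = (2 * uu) ^ (A.card - 1) * DD A :=
        ih A.card (by omega) A rfl hAnonempty
      have hQB : QQ (S' \ A) = (2 * uu) ^ ((S' \ A).card - 1) * DD (S' \ A) :=
        ih (S' \ A).card (by omega) (S' \ A) rfl hBnonempty
      rw [if_neg (by push_neg; exact ⟨hAnonempty, hAS'⟩), hQA, hQB]
      have hpow : ((2 * uu) ^ (A.card - 1)) * ((2 * uu) ^ ((S' \ A).card - 1)) * qq
          = (2 * uu) ^ (k + 1) * X := by
        have : k + 1 = (A.card - 1) + ((S' \ A).card - 1) + 2 := by omega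
        rw [this, pow_add, pow_add]
        rw [qq]
        ring
      calc (2 * uu) ^ (A.card - 1) * DD A * ((2 * uu) ^ ((S' \ A).card - 1) * DD (S' \ A)) * qq
          = ((2 * uu) ^ (A.card - 1)) * ((2 * uu) ^ ((S' \ A).card - 1)) * qq
              * (DD A * DD (S' \ A)) := by ring
        _ = (2 * uu) ^ (k + 1) * X * (DD A * DD (S' \ A)) := by rw [hpow]
    have hne' : (∅ : Finset ℕ) ≠ S' := fun h => hS'e h.symm
    have hDmid : ∑ A ∈ T, DD A * DD (S' \ A) * (if A = S' then 1 else X)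
        = X * ∑ A ∈ T, DD A * DD (S' \ A) := by
      rw [Finset.mul_sum]
      refine Finset.sum_congr rfl fun A hA => ?_
      rw [hT, Finset.mem_sdiff, Finset.mem_singleton] at hA
      rw [if_neg hA.2]
      ring
    rw [hQmid, hDmid]
    have hexp : k + 2 - 1 = k + 1 := rfl
    rw [hexp]
    simp only [Finset.sdiff_self, Finset.sdiff_empty, QQ_empty, DD_empty, one_mul, mul_one,
      eq_self_iff_true, true_or, or_true, if_true, if_neg hne']
    rw [hQS']
    linear_combination (-(2 * (2 * uu) ^ k * DD S')) * uu_mul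


lemma desL_eq_sum (l : List ℕ) :
    desL l = ∑ i ∈ Finset.range (l.length - 1),
      (if l.getD (i + 1) 0 < l.getD i 0 then 1 else 0) := by
  induction l with
  | nil => simp [desL]
  | cons x t ih =>
    cases t with
    | nil => simp [desL]
    | cons y t' =>
      rw [show desL (x :: y :: t') = (if y < x then 1 else 0) + desL (y :: t') from rfl, ih]
      rw [show (x :: y :: t').length - 1 = ((y :: t').length - 1) + 1 by simp]
      rw [Finset.sum_range_succ']
      simp only [List.getD_cons_succ, List.getD_cons_zero, zero_add]
      rw [add_comm]

lemma peL_eq_sum (l : List ℕ) :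
    peL l = ∑ i ∈ Finset.range (l.length - 2),
      (if l.getD i 0 < l.getD (i + 1) 0 ∧ l.getD (i + 2) 0 < l.getD (i + 1) 0 then 1 else 0) := by
  induction l with
  | nil => simp [peL]
  | cons x t ih =>
    cases t with
    | nil => simp [peL]
    | cons y t' =>
      cases t' with
      | nil => simp [peL]
      | cons z t'' =>
        rw [show peL (x :: y :: z :: t'') = (if x < y ∧ z < y then 1 else 0) + peL (y :: z :: t'')
          from rfl, ih]
        rw [show (x :: y :: z :: t'').length - 2 = ((y :: z :: t'').length - 2) + 1 by simp]
        rw [Finset.sum_range_succ']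
        simp only [List.getD_cons_succ, List.getD_cons_zero, zero_add]
        rw [add_comm]

def wordOf {n : ℕ} (π : Equiv.Perm (Fin n)) : List ℕ :=
  List.ofFn (fun i => (π i : ℕ) + 1)

lemma length_wordOf {n : ℕ} (π : Equiv.Perm (Fin n)) : (wordOf π).length = n := by
  simp [wordOf]

lemma getD_wordOf {n : ℕ} (π : Equiv.Perm (Fin n)) (i : ℕ) (hi : i < n) :
    (wordOf π).getD i 0 = (π ⟨i, hi⟩ : ℕ) + 1 := by
  have hl : i < (wordOf π).length := by rw [length_wordOf]; exact hi
  rw [List.getD_eq_getElem _ _ hl]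
  simp [wordOf]

lemma pval_eq_getD {n : ℕ} (π : Equiv.Perm (Fin n)) (i : ℕ) (h1 : 1 ≤ i) (h2 : i ≤ n) :
    pval π i = (wordOf π).getD (i - 1) 0 := by
  rw [pval, dif_pos ⟨h1, h2⟩, getD_wordOf π (i - 1) (by omega)]

lemma des_eq {n : ℕ} (π : Equiv.Perm (Fin n)) : des π = desL (wordOf π) := by
  rw [des, desSet, Finset.card_filter, desL_eq_sum, length_wordOf,
    Finset.sum_Ico_eq_sum_range]
  refine Finset.sum_congr rfl fun i hi => ?_
  rw [Finset.mem_range] at hi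
  rw [pval_eq_getD π (1 + i + 1) (by omega) (by omega),
    pval_eq_getD π (1 + i) (by omega) (by omega)]
  rw [show 1 + i + 1 - 1 = i + 1 by omega, show 1 + i - 1 = i by omega]

lemma pk_eq {n : ℕ} (π : Equiv.Perm (Fin n)) : (intPk π).card = peL (wordOf π) := by
  have hIoo : Finset.Ioo 1 n = Finset.Ico 2 n := by
    ext a; simp only [Finset.mem_Ioo, Finset.mem_Ico]; omega
  rw [intPk, Finset.card_filter, peL_eq_sum, length_wordOf, hIoo,
    Finset.sum_Ico_eq_sum_range]
  refine Finset.sum_congr rfl fun i hi => ?_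
  rw [Finset.mem_range] at hi
  unfold isPk
  rw [show 2 + i - 1 = 1 + i by omega]
  rw [pval_eq_getD π (1 + i) (by omega) (by omega),
    pval_eq_getD π (2 + i) (by omega) (by omega),
    pval_eq_getD π (2 + i + 1) (by omega) (by omega)]
  rw [show 1 + i - 1 = i by omega, show 2 + i - 1 = i + 1 by omega,
    show 2 + i + 1 - 1 = i + 2 by omega]
  congr 1

lemma wordOf_injective {n : ℕ} : Function.Injective (wordOf (n := n)) := by
  intro π σ h
  have hval : ∀ i : Fin n, (π i : ℕ) + 1 = (σ i : ℕ) + 1 := by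
    intro i
    have h2 := congrArg (fun l => l.getD (i : ℕ) 0) h
    rwa [getD_wordOf π i i.isLt, getD_wordOf σ i i.isLt] at h2
  apply Equiv.ext
  intro i
  apply Fin.ext
  have := hval i
  omega

lemma image_wordOf (n : ℕ) :
    Finset.image wordOf (Finset.univ : Finset (Equiv.Perm (Fin n))) =
      words (Finset.Icc 1 n) := by
  apply Finset.eq_of_subset_of_card_le
  · intro w hw
    rw [Finset.mem_image] at hw
    obtain ⟨π, -, rfl⟩ := hw
    rw [mem_words]
    constructor
    · rw [wordOf, List.nodup_ofFn]
      intro i j hij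
      simp only at hij
      exact π.injective (Fin.ext (by omega))
    · ext x
      simp only [List.mem_toFinset, wordOf, List.mem_ofFn, Finset.mem_Icc, Set.mem_range]
      constructor
      · rintro ⟨i, rfl⟩
        have := (π i).isLt
        omega
      · rintro ⟨h1, h2⟩
        refine ⟨π.symm ⟨x - 1, by omega⟩, ?_⟩
        simp
        omega
  · rw [card_words, Finset.card_image_of_injective _ wordOf_injective]
    simp [Nat.card_Icc, Fintype.card_perm]

open PowerSeries in
theorem stmt12 (n : ℕ) (hn : 1 ≤ n) :
    ∑ π : Equiv.Perm (Fin n),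
        ((4 : PowerSeries ℚ) * X * (((1 + X) ^ 2)⁻¹)) ^ ((intPk π).card + 1) =
      2 ^ (n + 1) * ((1 + X) ^ (n + 1))⁻¹ *
        ∑ π : Equiv.Perm (Fin n), (X : PowerSeries ℚ) ^ (des π + 1) := by
  have hcc : ∀ k : ℕ, constantCoeff ((1 + X : PowerSeries ℚ) ^ k) ≠ 0 := by
    intro k
    simp [map_pow]
  have hinv : ∀ k : ℕ, (((1 + X : PowerSeries ℚ) ^ k))⁻¹ = uu ^ k := by
    intro k
    rw [PowerSeries.inv_eq_iff_mul_eq_one (hcc k)]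
    rw [← mul_pow, mul_comm uu (1 + X : PowerSeries ℚ), uu_mul, one_pow]
  set S := Finset.Icc 1 n with hSdef
  have hSne : S.Nonempty := ⟨1, by simp [hSdef]; omega⟩
  have hScard : S.card = n := by simp [hSdef, Nat.card_Icc]
  have hL : ∑ π : Equiv.Perm (Fin n),
      ((4 : PowerSeries ℚ) * X * (((1 + X) ^ 2)⁻¹)) ^ ((intPk π).card + 1) = QQ S * qq := by
    rw [QQ, ← image_wordOf n, Finset.sum_image (fun x _ y _ h => wordOf_injective h),
      Finset.sum_mul]
    refine Finset.sum_congr rfl fun π _ => ?_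
    rw [hinv 2, pk_eq, pow_succ, show ((4 : PowerSeries ℚ) * X * uu ^ 2) = qq from rfl]
  have hR : ∑ π : Equiv.Perm (Fin n), (X : PowerSeries ℚ) ^ (des π + 1) = DD S * X := by
    rw [DD, ← image_wordOf n, Finset.sum_image (fun x _ y _ h => wordOf_injective h),
      Finset.sum_mul]
    refine Finset.sum_congr rfl fun π _ => ?_
    rw [des_eq, pow_succ]
  rw [hL, hR, hinv (n + 1), key_id n S hScard hSne]
  obtain ⟨k, rfl⟩ : ∃ k, n = k + 1 := ⟨n - 1, by omega⟩
  have hexp : k + 1 - 1 = k := rfl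
  rw [hexp, qq]
  ring
end
end

section
/- Let P be a finite poset on [n], and for σ ∈ S_n let A(σ) be the set of maps f: [n] → X (X a totally ordered set) with f(σ(1)) ≤ ⋯ ≤ f(σ(n)) and f(σ(s)) < f(σ(s+1)) whenever σ(s) > σ(s+1). Then the set A(P) of all P-partitions is the disjoint union of A(σ) over all linear extensions σ of P, where a P-partition is an order-preserving map f: [n] → X satisfying f(i) ≤ f(j) if i <_P j and f(i) < f(j) if i <_P j and i > j as integers. -/
open scoped Classical

noncomputable section

private lemma pair_iff16 {k : ℕ} {X : Type*} [LinearOrder X] (f : Fin k → X) {a b : Fin k}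
    (hne : a ≠ b) :
    (f a ≤ f b ∧ (b < a → f a < f b)) ↔ toLex (f a, a) < toLex (f b, b) := by
  rw [Prod.Lex.lt_iff]
  constructor
  · rintro ⟨h1, h2⟩
    rcases h1.lt_or_eq with h | h
    · exact Or.inl h
    · refine Or.inr ⟨h, ?_⟩
      rcases lt_trichotomy a b with hab | hab | hab
      · exact hab
      · exact absurd hab hne
      · exact absurd (h2 hab) h.not_lt
  · rintro (h | ⟨h1, h2⟩)
    · exact ⟨h.le, fun _ => h⟩
    · exact ⟨h1.le, fun hc => absurd hc h2.asymm⟩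

private lemma memA_iff16 {n : ℕ} {X : Type*} [LinearOrder X] (f : Fin n → X)
    (σ : Equiv.Perm (Fin n)) :
    (∀ (s : ℕ) (hs : s + 1 < n),
        f (σ ⟨s, Nat.lt_of_succ_lt hs⟩) ≤ f (σ ⟨s + 1, hs⟩) ∧
          (σ ⟨s + 1, hs⟩ < σ ⟨s, Nat.lt_of_succ_lt hs⟩ →
            f (σ ⟨s, Nat.lt_of_succ_lt hs⟩) < f (σ ⟨s + 1, hs⟩))) ↔
      StrictMono (fun s : Fin n => toLex (f (σ s), σ s)) := by
  cases n with
  | zero =>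
    constructor
    · intro _ a
      exact absurd a.isLt (Nat.not_lt_zero _)
    · intro _ s hs
      omega
  | succ m =>
    rw [Fin.strictMono_iff_lt_succ]
    have hcast : ∀ (s : ℕ) (hs : s + 1 < m + 1),
        (⟨s, Nat.lt_of_succ_lt hs⟩ : Fin (m + 1)) = Fin.castSucc ⟨s, Nat.lt_of_succ_lt_succ hs⟩ ∧
        (⟨s + 1, hs⟩ : Fin (m + 1)) = Fin.succ ⟨s, Nat.lt_of_succ_lt_succ hs⟩ := by
      intro s hs
      exact ⟨rfl, rfl⟩
    constructor
    · intro h i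
      have hs : (i : ℕ) + 1 < m + 1 := Nat.succ_lt_succ i.isLt
      have hne : σ (⟨i, Nat.lt_of_succ_lt hs⟩ : Fin (m + 1)) ≠ σ ⟨i + 1, hs⟩ := by
        intro hc
        have := σ.injective hc
        simp [Fin.ext_iff] at this
      have := (pair_iff16 f hne).1 (h i hs)
      obtain ⟨h1, h2⟩ := hcast i hs
      rw [h1, h2] at this
      simpa using this
    · intro h s hs
      have hne : σ (⟨s, Nat.lt_of_succ_lt hs⟩ : Fin (m + 1)) ≠ σ ⟨s + 1, hs⟩ := by
        intro hc
        have := σ.injective hc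
        simp [Fin.ext_iff] at this
      refine (pair_iff16 f hne).2 ?_
      obtain ⟨h1, h2⟩ := hcast s hs
      rw [h1, h2]
      exact h ⟨s, Nat.lt_of_succ_lt_succ hs⟩

theorem stmt16 (n : ℕ) (X : Type*) [LinearOrder X]
    (r : Fin n → Fin n → Prop) (hr : IsPartialOrder (Fin n) r) :
    let lin : Set (Equiv.Perm (Fin n)) :=
      {σ | ∀ i j, r i j → i ≠ j → σ⁻¹ i < σ⁻¹ j}
    let A : Equiv.Perm (Fin n) → Set (Fin n → X) := fun σ =>
      {f | ∀ (s : ℕ) (hs : s + 1 < n),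
        f (σ ⟨s, Nat.lt_of_succ_lt hs⟩) ≤ f (σ ⟨s + 1, hs⟩) ∧
          (σ ⟨s + 1, hs⟩ < σ ⟨s, Nat.lt_of_succ_lt hs⟩ →
            f (σ ⟨s, Nat.lt_of_succ_lt hs⟩) < f (σ ⟨s + 1, hs⟩))}
    ({f : Fin n → X | ∀ i j, r i j → i ≠ j →
        f i ≤ f j ∧ ((j : Fin n) < i → f i < f j)} = ⋃ σ ∈ lin, A σ) ∧
      lin.PairwiseDisjoint A := by
  intro lin A
  have key : ∀ (f : Fin n → X) (σ : Equiv.Perm (Fin n)),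
      f ∈ A σ ↔ StrictMono (fun s : Fin n => toLex (f (σ s), σ s)) :=
    fun f σ => memA_iff16 f σ
  have ginj : ∀ f : Fin n → X, Function.Injective (fun i : Fin n => toLex (f i, i)) := by
    intro f i j h
    simpa using congrArg (fun p : Lex (X × Fin n) => (ofLex p).2) h
  constructor
  · ext f
    simp only [Set.mem_setOf_eq, Set.mem_iUnion]
    constructor
    · intro hf
      set g : Fin n → X ×ₗ Fin n := fun i => toLex (f i, i) with hgdef
      set σ : Equiv.Perm (Fin n) := Tuple.sort g with hσdef
      have hmono : Monotone (g ∘ σ) := Tuple.monotone_sort g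
      have hsm : StrictMono (g ∘ σ) :=
        hmono.strictMono_of_injective ((ginj f).comp σ.injective)
      have hglt : ∀ i j, r i j → i ≠ j → g i < g j := by
        intro i j hij hne
        obtain ⟨h1, h2⟩ := hf i j hij hne
        exact (pair_iff16 f hne).1 ⟨h1, h2⟩
      refine ⟨σ, ?_, (key f σ).2 hsm⟩
      intro i j hij hne
      have h1 : (g ∘ σ) (σ⁻¹ i) < (g ∘ σ) (σ⁻¹ j) := by
        simpa using hglt i j hij hne
      exact hsm.lt_iff_lt.1 h1
    · rintro ⟨σ, hσ, hfA⟩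
      have hsm := (key f σ).1 hfA
      intro i j hij hne
      have hlt : σ⁻¹ i < σ⁻¹ j := hσ i j hij hne
      have h1 := hsm hlt
      simp only [Equiv.Perm.coe_inv, Equiv.apply_symm_apply] at h1
      exact (pair_iff16 f hne).2 h1
  · intro σ hσ τ hτ hst
    rw [Function.onFun]
    rw [Set.disjoint_left]
    intro f hfσ hfτ
    have hsmσ := (key f σ).1 hfσ
    have hsmτ := (key f τ).1 hfτ
    set g : Fin n → X ×ₗ Fin n := fun i => toLex (f i, i) with hgdef
    have hrange : Set.range (fun s : Fin n => toLex (f (σ s), σ s))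
        = Set.range (fun s : Fin n => toLex (f (τ s), τ s)) := by
      have h1 : (fun s : Fin n => toLex (f (σ s), σ s)) = g ∘ σ := rfl
      have h2 : (fun s : Fin n => toLex (f (τ s), τ s)) = g ∘ τ := rfl
      rw [h1, h2, σ.surjective.range_comp, τ.surjective.range_comp]
    haveI hwf : WellFoundedLT (Fin n) := inferInstance
    have heq := (@StrictMono.range_inj (Fin n) (X ×ₗ Fin n) _ _ hwf _ _ hsmσ hsmτ).1 hrange
    apply hst
    ext s
    exact congrArg Fin.val (ginj f (congrFun heq s))
end
end
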